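/- arXiv:2310.16022 — 5 statements merged into one kernel-verified Lean document; each statement's English description precedes it below -/
import Mathlib

section
/- Natural colors of finite words are invariant under the right congruence of the leading word: if u ∼_L u′ then for all nonempty finite words v, the natural color of v with respect to u equals the natural color of v with respect to u′. -/
open scoped Classical

/-- Concatenation of a finite word with an infinite word. -/
def wcat {A : Type} (u : List A) (w : ℕ → A) : ℕ → A :=
  fun n => if h : n < u.length then u.get ⟨n, h⟩ else w (n - u.length)

/-- The infinite periodic word `v^ω`. -/
def wpow {A : Type} [Inhabited A] (v : List A) : ℕ → A :=
  fun n => v.getD (n % v.length) default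

/-- The ultimately periodic word `u · v^ω`. -/
def upw {A : Type} [Inhabited A] (u v : List A) : ℕ → A := wcat u (wpow v)

/-- The finite word `v^i`. -/
def wrep {A : Type} (v : List A) (i : ℕ) : List A := (List.replicate i v).flatten

/-- The right congruence `x ∼_L y`. -/
def simL {A : Type} (L : Set (ℕ → A)) (x y : List A) : Prop :=
  ∀ w : ℕ → A, wcat x w ∈ L ↔ wcat y w ∈ L

/-- `w` is `u`-invariant: `u ∼_L u·w`. -/
def UInv {A : Type} (L : Set (ℕ → A)) (u w : List A) : Prop := simL L u (u ++ w)

/-- `v` is relevant to `u`. -/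
def URel {A : Type} (L : Set (ℕ → A)) (u v : List A) : Prop :=
  ∃ z : List A, UInv L u (v ++ z)

/-- `v` has natural color at most `c` wrt `u`. -/
def ColorAtMost {A : Type} [Inhabited A] (L : Set (ℕ → A)) (u : List A) :
    ℕ → List A → Prop
  | c, v => ∀ z : List A, UInv L u (v ++ z) →
      ((upw u (v ++ z) ∈ L ↔ Even c) ∨
        ∃ i : ℕ, 0 < i ∧ ∃ c' : Fin c, ColorAtMost L u c' (wrep (v ++ z) i))
  termination_by c => c
  decreasing_by exact c'.isLt

/-- The natural color of the finite word `v` wrt `u`: `⊥` (i.e. `-∞`) if `v` is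
irrelevant to `u`, and otherwise the minimal `c ≥ 0` as in the paper. -/
noncomputable def ncol {A : Type} [Inhabited A] (L : Set (ℕ → A)) (u v : List A) :
    WithBot ℕ :=
  if URel L u v then ((sInf {c : ℕ | ColorAtMost L u c v} : ℕ) : WithBot ℕ) else ⊥

/-- `v` is stable wrt `u`. -/
def Stable {A : Type} [Inhabited A] (L : Set (ℕ → A)) (u v : List A) : Prop :=
  ∀ i : ℕ, 0 < i → ncol L u v = ncol L u (wrep v i)

/-- `v` is `u`-reliable. -/
def UReliable {A : Type} [Inhabited A] (L : Set (ℕ → A)) (u v : List A) : Prop :=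
  UInv L u v ∧ Stable L u v

/-- The natural color of an ultimately periodic infinite word. -/
noncomputable def icol {A : Type} [Inhabited A] (L : Set (ℕ → A)) (w : ℕ → A) : ℕ :=
  sInf {c : ℕ | ∃ u v : List A, v ≠ [] ∧ w = upw u v ∧ UInv L u v ∧
    ncol L u v = (c : WithBot ℕ)}

/-- The set of states visited infinitely often by a run. -/
def infSet {Q : Type} (r : ℕ → Q) : Set Q := {q | ∀ n : ℕ, ∃ m : ℕ, n ≤ m ∧ r m = q}

/-- The run of a complete deterministic automaton on an infinite word. -/
def runOf {A Q : Type} (δ : Q → A → Q) (q0 : Q) (w : ℕ → A) : ℕ → Q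
  | 0 => q0
  | n + 1 => δ (runOf δ q0 w n) (w n)

/-- `L` is ω-regular: recognized by some deterministic Muller automaton. -/
def OmegaRegular {A : Type} (L : Set (ℕ → A)) : Prop :=
  ∃ (Q : Type) (_ : Fintype Q) (q0 : Q) (δ : Q → A → Q) (α : Set (Set Q)),
    ∀ w : ℕ → A, w ∈ L ↔ infSet (runOf δ q0 w) ∈ α



lemma wcat_append {A : Type} (u w : List A) (z : ℕ → A) :
    wcat (u ++ w) z = wcat u (wcat w z) := by
  funext n
  simp only [wcat, List.length_append]
  by_cases h1 : n < u.length
  · rw [dif_pos (by omega), dif_pos h1]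
    exact List.getElem_append_left h1
  · rw [dif_neg h1]
    by_cases h2 : n < u.length + w.length
    · rw [dif_pos h2, dif_pos (by omega)]
      simp only [List.get_eq_getElem]
      exact List.getElem_append_right (Nat.le_of_not_lt h1)
    · rw [dif_neg h2, dif_neg (by omega)]
      congr 1
      omega

lemma uinv_iff {A : Type} (L : Set (ℕ → A)) {u u' : List A} (h : simL L u u')
    (w : List A) : UInv L u w ↔ UInv L u' w := by
  constructor <;> intro hi z
  · rw [wcat_append, ← h (wcat w z), ← wcat_append, ← hi z, h z]
  · rw [wcat_append, h (wcat w z), ← wcat_append, ← hi z, ← h z]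

lemma colorAtMost_iff {A : Type} [Inhabited A] (L : Set (ℕ → A)) {u u' : List A}
    (h : simL L u u') : ∀ c v, ColorAtMost L u c v ↔ ColorAtMost L u' c v := by
  intro c
  induction c using Nat.strong_induction_on with
  | _ c ih =>
    intro v
    rw [ColorAtMost, ColorAtMost]
    constructor <;> intro hc z hz
    · rcases hc z ((uinv_iff L h _).2 hz) with h1 | ⟨i, hi, c', hc'⟩
      · left
        simp only [upw] at h1 ⊢
        rwa [← h (wpow (v ++ z))]
      · exact Or.inr ⟨i, hi, c', (ih c' c'.isLt _).1 hc'⟩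
    · rcases hc z ((uinv_iff L h _).1 hz) with h1 | ⟨i, hi, c', hc'⟩
      · left
        simp only [upw] at h1 ⊢
        rwa [h (wpow (v ++ z))]
      · exact Or.inr ⟨i, hi, c', (ih c' c'.isLt _).2 hc'⟩

/-- natural colors of finite words are invariant under the right
congruence of the leading word. -/
theorem color_invariant_under_simL {A : Type} [Inhabited A] (L : Set (ℕ → A))
    (hreg : OmegaRegular L) (u u' : List A) (h : simL L u u') :
    ∀ v : List A, v ≠ [] → ncol L u v = ncol L u' v := by
  intro v _
  have hrel : URel L u v ↔ URel L u' v := by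
    constructor <;> rintro ⟨z, hz⟩
    · exact ⟨z, (uinv_iff L h _).1 hz⟩
    · exact ⟨z, (uinv_iff L h _).2 hz⟩
  unfold ncol
  by_cases hr : URel L u v
  · rw [if_pos hr, if_pos (hrel.1 hr)]
    congr 1
    congr 1
    ext c
    exact colorAtMost_iff L h c v
  · rw [if_neg hr, if_neg (fun h' => hr (hrel.2 h'))]
end

section
/- Natural colors of finite words are monotonically non-increasing under extension: if the natural color of v with respect to u is c, then for every finite word z, the natural color of vz with respect to u is at most c. -/
open scoped Classical

namespace NatColor
set_option linter.unusedSectionVars false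

section Words
variable {A : Type} [Inhabited A]

lemma wcat_lt (x : List A) (w : ℕ → A) {n : ℕ} (h : n < x.length) :
    wcat x w n = x.get ⟨n, h⟩ := by simp [wcat, h]

lemma wcat_ge (x : List A) (w : ℕ → A) {n : ℕ} (h : x.length ≤ n) :
    wcat x w n = w (n - x.length) := by
  simp [wcat, Nat.not_lt.mpr h]

lemma wcat_add (x : List A) (w : ℕ → A) (k : ℕ) :
    wcat x w (x.length + k) = w k := by
  rw [wcat_ge x w (Nat.le_add_right _ _)]
  simp

lemma wcat_append (x y : List A) (w : ℕ → A) :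
    wcat (x ++ y) w = wcat x (wcat y w) := by
  funext n
  by_cases h1 : n < x.length
  · rw [wcat_lt x (wcat y w) h1, wcat_lt (x ++ y) w (by simp; omega)]
    simp only [List.get_eq_getElem]
    rw [List.getElem_append_left h1]
  · push_neg at h1
    rw [wcat_ge x (wcat y w) h1]
    by_cases h2 : n < x.length + y.length
    · have h3 : n < (x ++ y).length := by simp; omega
      rw [wcat_lt (x ++ y) w h3, wcat_lt y w (by omega)]
      simp only [List.get_eq_getElem]
      rw [List.getElem_append_right h1]
    · push_neg at h2
      rw [wcat_ge (x++y) w (by simp; omega), wcat_ge y w (by omega)]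
      congr 1
      simp
      omega

lemma wrep_zero (x : List A) : wrep x 0 = [] := rfl

lemma wrep_succ (x : List A) (i : ℕ) : wrep x (i + 1) = x ++ wrep x i := by
  simp [wrep, List.replicate_succ]

lemma wrep_one (x : List A) : wrep x 1 = x := by simp [wrep_succ, wrep_zero]

lemma length_wrep (x : List A) (i : ℕ) : (wrep x i).length = i * x.length := by
  induction i with
  | zero => simp [wrep_zero]
  | succ i ih => simp [wrep_succ, ih]; ring

lemma wrep_ne_nil {x : List A} (hx : x ≠ []) {i : ℕ} (hi : 0 < i) :
    wrep x i ≠ [] := by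
  have : (wrep x i).length = i * x.length := length_wrep x i
  intro h
  rw [h] at this
  simp only [List.length_nil] at this
  have h2 : 0 < x.length := List.length_pos_iff.mpr hx
  rcases Nat.mul_eq_zero.mp this.symm with h4 | h4 <;> omega

lemma getD_wrep {x : List A} {i m : ℕ} (h : m < i * x.length) :
    (wrep x i).getD m default = x.getD (m % x.length) default := by
  induction i generalizing m with
  | zero => simp at h
  | succ i ih =>
    rw [wrep_succ]
    rw [Nat.succ_mul] at h
    by_cases h1 : m < x.length
    · rw [List.getD_append _ _ _ _ h1, Nat.mod_eq_of_lt h1]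
    · push_neg at h1
      have hxl : 0 < x.length := by
        rcases Nat.eq_zero_or_pos x.length with h2 | h2
        · rw [h2, Nat.mul_zero] at h; omega
        · exact h2
      rw [List.getD_append_right _ _ _ _ h1, ih (by omega)]
      congr 1
      conv_rhs => rw [show m = x.length + (m - x.length) by omega, Nat.add_mod_left]

lemma wpow_wrep (x : List A) {i : ℕ} (hi : 0 < i) :
    wpow (wrep x i) = wpow x := by
  by_cases hx : x = []
  · subst hx
    have : wrep ([] : List A) i = [] := by
      have := length_wrep ([] : List A) i; simpa [List.length_eq_zero_iff] using this
    rw [this]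
  · funext n
    have hxl : 0 < x.length := List.length_pos_iff.mpr hx
    have hl : 0 < (wrep x i).length := by rw [length_wrep]; positivity
    simp only [wpow, length_wrep]
    rw [getD_wrep (Nat.mod_lt _ (by rw [length_wrep] at hl; exact hl))]
    congr 1
    exact Nat.mod_mod_of_dvd _ (dvd_mul_left _ _)

lemma wpow_eq_wcat {x : List A} (hx : x ≠ []) :
    wpow x = wcat x (wpow x) := by
  funext n
  have hxl : 0 < x.length := List.length_pos_iff.mpr hx
  by_cases h : n < x.length
  · rw [wcat_lt x _ h]
    simp only [wpow, Nat.mod_eq_of_lt h]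
    rw [List.getD_eq_getElem _ _ h]
    simp
  · push_neg at h
    rw [wcat_ge x _ h]
    simp only [wpow]
    congr 1
    conv_lhs => rw [show n = (n - x.length) + x.length by omega]
    rw [Nat.add_mod_right]

end Words
end NatColor
namespace NatColor
set_option linter.unusedSectionVars false

lemma wrep_add {A : Type} (x : List A) (a b : ℕ) :
    wrep x (a + b) = wrep x a ++ wrep x b := by
  unfold wrep
  rw [List.replicate_add]; exact List.flatten_append

section Auto
variable {A : Type} [Inhabited A] {Q : Type} (δ : Q → A → Q)

/-- end state after reading a finite word -/
def dstar (q : Q) (x : List A) : Q := x.foldl δ q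

/-- set of states visited while reading a finite word (incl. endpoints) -/
def vis : Q → List A → Set Q
  | q, [] => {q}
  | q, a :: x => insert q (vis (δ q a) x)

def tauF (x : List A) : Q → Q × Set Q := fun q => (dstar δ q x, vis δ q x)

def rtF (x : List A) : (Q → Q × Set Q) × Bool := (tauF δ x, x.isEmpty)

lemma dstar_nil (q : Q) : dstar δ q [] = q := rfl

lemma dstar_cons (q : Q) (a : A) (x : List A) :
    dstar δ q (a :: x) = dstar δ (δ q a) x := rfl

lemma dstar_append (q : Q) (x y : List A) :
    dstar δ q (x ++ y) = dstar δ (dstar δ q x) y := List.foldl_append ..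

lemma self_mem_vis (q : Q) (x : List A) : q ∈ vis δ q x := by
  cases x with
  | nil => exact rfl
  | cons a x => exact Set.mem_insert _ _

lemma vis_append (q : Q) (x y : List A) :
    vis δ q (x ++ y) = vis δ q x ∪ vis δ (dstar δ q x) y := by
  induction x generalizing q with
  | nil =>
    simp only [List.nil_append, dstar_nil, vis]
    rw [Set.union_comm, Set.union_eq_self_of_subset_right]
    simp [self_mem_vis]
  | cons a x ih =>
    simp only [List.cons_append, vis, List.append_eq, ih (δ q a), dstar_cons]
    rw [Set.insert_union]

def compT (s t : Q → Q × Set Q) : Q → Q × Set Q :=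
  fun q => ((t (s q).1).1, (s q).2 ∪ (t (s q).1).2)

lemma tau_append (x y : List A) :
    tauF δ (x ++ y) = compT (tauF δ x) (tauF δ y) := by
  funext q
  simp [tauF, compT, dstar_append, vis_append]

lemma tau_append_congr {x x' y y' : List A} (hx : tauF δ x = tauF δ x')
    (hy : tauF δ y = tauF δ y') : tauF δ (x ++ y) = tauF δ (x' ++ y') := by
  rw [tau_append, tau_append, hx, hy]

lemma tau_wrep_congr {x x' : List A} (hx : tauF δ x = tauF δ x') (i : ℕ) :
    tauF δ (wrep x i) = tauF δ (wrep x' i) := by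
  induction i with
  | zero => rfl
  | succ i ih => rw [wrep_succ, wrep_succ]; exact tau_append_congr δ hx ih

/-- existence of an idempotent power -/
lemma exists_idem_pow [Finite Q] (x : List A) :
    ∃ m : ℕ, 0 < m ∧ tauF δ (wrep x m ++ wrep x m) = tauF δ (wrep x m) := by
  obtain ⟨k, l, hkl, he⟩ : ∃ k l : ℕ, k < l ∧
      tauF δ (wrep x k) = tauF δ (wrep x l) := by
    obtain ⟨k, l, hne, he⟩ :=
      Finite.exists_ne_map_eq_of_infinite (fun m => tauF δ (wrep x m))
    rcases lt_or_gt_of_ne hne with h | h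
    · exact ⟨k, l, h, he⟩
    · exact ⟨l, k, h, he.symm⟩
  set p := l - k with hp
  have hp1 : 0 < p := by omega
  have key : ∀ s, k ≤ s → tauF δ (wrep x (s + p)) = tauF δ (wrep x s) := by
    intro s hs
    have h1 : s + p = l + (s - k) := by omega
    have h2 : s = k + (s - k) := by omega
    rw [h1, wrep_add, tau_append, ← he, ← tau_append, ← wrep_add, ← h2]
  have keyn : ∀ n s, k ≤ s → tauF δ (wrep x (s + n * p)) = tauF δ (wrep x s) := by
    intro n
    induction n with
    | zero => intro s hs; simp
    | succ n ih =>
      intro s hs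
      have : s + (n + 1) * p = (s + n * p) + p := by ring
      rw [this, key _ (by nlinarith), ih s hs]
  refine ⟨(k + 1) * p, by positivity, ?_⟩
  rw [← wrep_add]
  have h3 : (k + 1) * p + (k + 1) * p = (k + 1) * p + ((k + 1)) * p := by ring
  rw [h3, keyn (k + 1) ((k + 1) * p) (by nlinarith)]

/-- runs only depend on the inspected prefix -/
lemma runOf_congr (q : Q) (w w' : ℕ → A) (n : ℕ) (h : ∀ k, k < n → w k = w' k) :
    runOf δ q w n = runOf δ q w' n := by
  induction n with
  | zero => rfl
  | succ n ih =>
    simp only [runOf]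
    rw [ih (fun k hk => h k (by omega)), h n (by omega)]

lemma runOf_prefix (x : List A) (q : Q) (w : ℕ → A) :
    runOf δ q (wcat x w) x.length = dstar δ q x := by
  induction x using List.reverseRecOn generalizing w with
  | nil => rfl
  | append_singleton x a ih =>
    have hlen : (x ++ [a]).length = x.length + 1 := by simp
    rw [hlen]
    simp only [runOf]
    have h1 : runOf δ q (wcat (x ++ [a]) w) x.length = dstar δ q x := by
      rw [runOf_congr δ q _ (wcat x w) x.length ?_, ih w]
      intro k hk
      rw [wcat_lt _ _ (show k < (x ++ [a]).length by simp; omega), wcat_lt _ _ hk]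
      simp only [List.get_eq_getElem]
      rw [List.getElem_append_left hk]
    rw [h1]
    have h2 : wcat (x ++ [a]) w x.length = a := by
      rw [wcat_lt _ _ (show x.length < (x ++ [a]).length by simp)]
      simp
    rw [h2, dstar_append]
    rfl

lemma runOf_wcat (x : List A) (q : Q) (w : ℕ → A) (k : ℕ) :
    runOf δ q (wcat x w) (x.length + k) = runOf δ (dstar δ q x) w k := by
  induction k with
  | zero => exact runOf_prefix δ x q w
  | succ k ih =>
    have h0 : x.length + (k + 1) = (x.length + k) + 1 := rfl
    rw [h0]
    simp only [runOf]
    rw [ih, wcat_add]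

lemma infSet_shift (r : ℕ → Q) (m : ℕ) :
    infSet (fun j => r (m + j)) = infSet r := by
  ext q
  constructor
  · intro h n
    obtain ⟨k, hk, he⟩ := h n
    exact ⟨m + k, by omega, he⟩
  · intro h n
    obtain ⟨k, hk, he⟩ := h (m + n)
    refine ⟨k - m, by omega, ?_⟩
    show r (m + (k - m)) = q
    rw [show m + (k - m) = k by omega]
    exact he

lemma mem_vis_iff (q : Q) (x : List A) (s : Q) :
    s ∈ vis δ q x ↔ ∃ m, m ≤ x.length ∧ dstar δ q (x.take m) = s := by
  induction x generalizing q with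
  | nil =>
    constructor
    · intro h
      have hs : s = q := h
      exact ⟨0, Nat.le_refl 0, hs.symm⟩
    · rintro ⟨m, hm, hd⟩
      have hm0 : m = 0 := by simpa using hm
      subst hm0
      have : q = s := hd
      exact this ▸ rfl
  | cons a x ih =>
    simp only [vis, Set.mem_insert_iff, ih]
    constructor
    · rintro (rfl | ⟨m, hm, hd⟩)
      · exact ⟨0, by simp, rfl⟩
      · exact ⟨m + 1, by simp; omega, by simpa [List.take_succ_cons, dstar_cons] using hd⟩
    · rintro ⟨m, hm, hd⟩
      cases m with
      | zero => left; exact hd.symm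
      | succ m =>
        right
        refine ⟨m, by simp at hm; omega, ?_⟩
        simpa [List.take_succ_cons, dstar_cons] using hd

end Auto
end NatColor
namespace NatColor
set_option linter.unusedSectionVars false

section Sem
variable {A : Type} [Inhabited A] {Q : Type} [Finite Q] (δ : Q → A → Q) (q0 : Q)
  (α : Set (Set Q)) (L : Set (ℕ → A))
  (hα : ∀ w : ℕ → A, w ∈ L ↔ infSet (runOf δ q0 w) ∈ α)

lemma infSet_wpow {x : List A} (hx : x ≠ []) (q : Q)
    (hfix : dstar δ (dstar δ q x) x = dstar δ q x) :
    infSet (runOf δ q (wpow x)) = vis δ (dstar δ q x) x := by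
  have hn : 0 < x.length := List.length_pos_iff.mpr hx
  set n := x.length with hndef
  set p := dstar δ q x with hpdef
  have hcat : wpow x = wcat x (wpow x) := wpow_eq_wcat hx
  have step : ∀ (q' : Q) (j : ℕ),
      runOf δ q' (wpow x) (n + j) = runOf δ (dstar δ q' x) (wpow x) j := by
    intro q' j
    conv_lhs => rw [hcat]
    exact runOf_wcat δ x q' (wpow x) j
  have fromp : ∀ (k j : ℕ), runOf δ p (wpow x) (n * k + j) = runOf δ p (wpow x) j := by
    intro k
    induction k with
    | zero => intro j; simp
    | succ k ih =>
      intro j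
      have h1 : n * (k + 1) + j = n + (n * k + j) := by ring
      rw [h1, step p (n * k + j), hfix, ih]
  have base : ∀ m, m ≤ n → runOf δ p (wpow x) m = dstar δ p (x.take m) := by
    intro m
    induction m with
    | zero => intro _; rfl
    | succ m ih =>
      intro hm
      have hmn : m < n := by omega
      simp only [runOf]
      rw [ih (by omega)]
      have hw : wpow x m = x.get ⟨m, hmn⟩ := by
        simp only [wpow, ← hndef, Nat.mod_eq_of_lt hmn]
        rw [List.getD_eq_getElem _ _ hmn]
        simp
      rw [hw, List.take_succ, List.getElem?_eq_getElem hmn]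
      rw [dstar_append]
      rfl
  ext s
  constructor
  · intro h
    obtain ⟨j, hj, he⟩ := h n
    have hj' : j = n + (j - n) := by omega
    rw [hj', step q (j - n), ← hpdef] at he
    rw [← Nat.div_add_mod (j - n) n, fromp,
      base _ (le_of_lt (Nat.mod_lt _ hn))] at he
    rw [mem_vis_iff]
    exact ⟨(j - n) % n, le_of_lt (Nat.mod_lt _ hn), he⟩
  · intro h
    rw [mem_vis_iff] at h
    obtain ⟨m, hm, hd⟩ := h
    intro N
    refine ⟨n + (n * N + m), ?_, ?_⟩
    · have := Nat.le_mul_of_pos_left N hn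
      omega
    · rw [step q, ← hpdef, fromp, base m hm]
      exact hd

include hα

lemma memL_wcat (x : List A) (w : ℕ → A) :
    wcat x w ∈ L ↔ infSet (runOf δ (dstar δ q0 x) w) ∈ α := by
  have h1 : (fun j => runOf δ q0 (wcat x w) (x.length + j)) =
      runOf δ (dstar δ q0 x) w := funext (runOf_wcat δ x q0 w)
  rw [hα (wcat x w), ← infSet_shift (runOf δ q0 (wcat x w)) x.length, h1]

lemma mem_wcat_congr {a b : List A} (h : dstar δ q0 a = dstar δ q0 b) (w : ℕ → A) :
    wcat a w ∈ L ↔ wcat b w ∈ L := by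
  rw [memL_wcat δ q0 α L hα, memL_wcat δ q0 α L hα, h]

lemma acc_idem (u : List A) {x : List A} (hx : x ≠ [])
    (hid : tauF δ (x ++ x) = tauF δ x) :
    (upw u x ∈ L ↔ vis δ (dstar δ (dstar δ q0 u) x) x ∈ α) := by
  have hfix : dstar δ (dstar δ (dstar δ q0 u) x) x = dstar δ (dstar δ q0 u) x := by
    have := congrFun hid (dstar δ q0 u)
    have h1 := congrArg Prod.fst this
    simpa [tauF, dstar_append] using h1
  rw [show upw u x = wcat u (wpow x) from rfl, memL_wcat δ q0 α L hα,
    infSet_wpow δ hx _ hfix]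

lemma upw_mem_congr (u : List A) {x x' : List A} (h : rtF δ x = rtF δ x') :
    (upw u x ∈ L ↔ upw u x' ∈ L) := by
  have htau : tauF δ x = tauF δ x' := congrArg Prod.fst h
  by_cases hx : x = []
  · subst hx
    have hx' : x' = [] := by
      have := congrArg Prod.snd h
      simpa [rtF, List.isEmpty_iff] using this.symm
    subst hx'
    exact Iff.rfl
  · have hx' : x' ≠ [] := by
      intro hc
      subst hc
      have := congrArg Prod.snd h
      simp [rtF, List.isEmpty_iff] at this
      exact hx this
    obtain ⟨m, hm, hid⟩ := exists_idem_pow δ x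
    have htw : tauF δ (wrep x m) = tauF δ (wrep x' m) := tau_wrep_congr δ htau m
    have hid' : tauF δ (wrep x' m ++ wrep x' m) = tauF δ (wrep x' m) := by
      rw [← tau_append_congr δ htw htw, hid, htw]
    have e1 : upw u x = upw u (wrep x m) := by
      rw [show upw u x = wcat u (wpow x) from rfl,
        show upw u (wrep x m) = wcat u (wpow (wrep x m)) from rfl, wpow_wrep x hm]
    have e2 : upw u x' = upw u (wrep x' m) := by
      rw [show upw u x' = wcat u (wpow x') from rfl,
        show upw u (wrep x' m) = wcat u (wpow (wrep x' m)) from rfl, wpow_wrep x' hm]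
    rw [e1, e2, acc_idem δ q0 α L hα u (wrep_ne_nil hx hm) hid,
      acc_idem δ q0 α L hα u (wrep_ne_nil hx' hm) hid']
    have hd : dstar δ (dstar δ q0 u) (wrep x m) = dstar δ (dstar δ q0 u) (wrep x' m) := by
      have := congrFun htw (dstar δ q0 u)
      exact congrArg Prod.fst this
    have hv : vis δ (dstar δ (dstar δ q0 u) (wrep x m)) (wrep x m) =
        vis δ (dstar δ (dstar δ q0 u) (wrep x' m)) (wrep x' m) := by
      rw [← hd]
      have := congrFun htw (dstar δ (dstar δ q0 u) (wrep x m))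
      exact congrArg Prod.snd this
    rw [hv]

end Sem

section Sim
variable {A : Type} [Inhabited A] (L : Set (ℕ → A)) (u : List A)

lemma simL_trans {x y z : List A} (h1 : simL L x y) (h2 : simL L y z) :
    simL L x z := fun w => (h1 w).trans (h2 w)

lemma simL_appendr {x y : List A} (h : simL L x y) (c : List A) :
    simL L (x ++ c) (y ++ c) := by
  intro w
  rw [wcat_append, wcat_append]
  exact h _

lemma uinv_nil : UInv L u [] := by
  intro w
  rw [List.append_nil]

lemma uinv_append {a b : List A} (ha : UInv L u a) (hb : UInv L u b) :
    UInv L u (a ++ b) := by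
  have h1 : simL L (u ++ b) ((u ++ a) ++ b) := simL_appendr L ha b
  have h2 : simL L u ((u ++ a) ++ b) := simL_trans L hb h1
  have h3 : (u ++ a) ++ b = u ++ (a ++ b) := List.append_assoc u a b
  rw [h3] at h2
  exact h2

lemma uinv_wrep {x : List A} (hx : UInv L u x) (i : ℕ) : UInv L u (wrep x i) := by
  induction i with
  | zero => exact uinv_nil L u
  | succ i ih => rw [wrep_succ]; exact uinv_append L u hx ih

end Sim
end NatColor
namespace NatColor
set_option linter.unusedSectionVars false

section ColorBasic
variable {A : Type} [Inhabited A] (L : Set (ℕ → A)) (u : List A)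

lemma colorAtMost_append (c : ℕ) (v z0 : List A) (h : ColorAtMost L u c v) :
    ColorAtMost L u c (v ++ z0) := by
  rw [ColorAtMost] at h ⊢
  intro z hz
  have ha : (v ++ z0) ++ z = v ++ (z0 ++ z) := List.append_assoc ..
  rw [ha] at hz ⊢
  exact h (z0 ++ z) hz

lemma colorAtMost_succ (c : ℕ) (v : List A) (h : ColorAtMost L u c v) :
    ColorAtMost L u (c + 1) v := by
  rw [ColorAtMost]
  intro z hz
  right
  refine ⟨1, one_pos, ⟨c, Nat.lt_succ_self c⟩, ?_⟩
  show ColorAtMost L u c (wrep (v ++ z) 1)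
  rw [wrep_one]
  exact colorAtMost_append L u c v z h

lemma colorAtMost_mono {c d : ℕ} (h : c ≤ d) {v : List A}
    (hc : ColorAtMost L u c v) : ColorAtMost L u d v := by
  induction d with
  | zero => have : c = 0 := by omega
            exact this ▸ hc
  | succ d ih =>
    rcases Nat.lt_or_ge c (d+1) with h1 | h1
    · exact colorAtMost_succ L u d v (ih (by omega))
    · have : c = d + 1 := by omega
      exact this ▸ hc

end ColorBasic

section RtCongr
variable {A : Type} [Inhabited A] {Q : Type} (δ : Q → A → Q)

lemma isEmpty_eq_decide_length {B : Type} (l : List B) :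
    l.isEmpty = decide (l.length = 0) := by cases l <;> simp

lemma length_zero_congr {x x' : List A} (h : rtF δ x = rtF δ x') :
    x.length = 0 ↔ x'.length = 0 := by
  have hemp : x.isEmpty = x'.isEmpty := congrArg Prod.snd h
  rw [isEmpty_eq_decide_length, isEmpty_eq_decide_length, decide_eq_decide] at hemp
  exact hemp

lemma rt_append_congr {x x' : List A} (h : rtF δ x = rtF δ x') (z : List A) :
    rtF δ (x ++ z) = rtF δ (x' ++ z) := by
  have htau : tauF δ x = tauF δ x' := congrArg Prod.fst h
  have hl := length_zero_congr δ h
  unfold rtF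
  rw [tau_append_congr δ htau rfl]
  simp only [Prod.mk.injEq, true_and]
  rw [isEmpty_eq_decide_length, isEmpty_eq_decide_length, decide_eq_decide,
    List.length_append, List.length_append]
  omega

lemma rt_wrep_congr {x x' : List A} (h : rtF δ x = rtF δ x') (i : ℕ) :
    rtF δ (wrep x i) = rtF δ (wrep x' i) := by
  have htau : tauF δ x = tauF δ x' := congrArg Prod.fst h
  have hemp : x.isEmpty = x'.isEmpty := congrArg Prod.snd h
  have hl := length_zero_congr δ h
  unfold rtF
  rw [tau_wrep_congr δ htau i]
  simp only [Prod.mk.injEq, true_and]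
  rw [isEmpty_eq_decide_length, isEmpty_eq_decide_length, decide_eq_decide,
    length_wrep, length_wrep]
  simp only [Nat.mul_eq_zero]
  tauto

end RtCongr

section ColorSem
variable {A : Type} [Inhabited A] {Q : Type} [Finite Q] (δ : Q → A → Q) (q0 : Q)
  (α : Set (Set Q)) (L : Set (ℕ → A))
  (hα : ∀ w : ℕ → A, w ∈ L ↔ infSet (runOf δ q0 w) ∈ α)
  (u : List A)
include hα

/-- `ColorAtMost` only depends on the rich type of the word. -/
lemma colorAtMost_congr : ∀ (c : ℕ) {v v' : List A}, rtF δ v = rtF δ v' →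
    ColorAtMost L u c v → ColorAtMost L u c v' := by
  intro c
  induction c using Nat.strong_induction_on with
  | _ c ih =>
    intro v v' h hc
    rw [ColorAtMost] at hc ⊢
    intro z hz
    have htau : tauF δ v = tauF δ v' := congrArg Prod.fst h
    have hrt : rtF δ (v ++ z) = rtF δ (v' ++ z) := rt_append_congr δ h z
    have hd : dstar δ q0 (u ++ (v' ++ z)) = dstar δ q0 (u ++ (v ++ z)) := by
      rw [dstar_append, dstar_append, dstar_append, dstar_append]
      have := congrArg Prod.fst (congrFun htau (dstar δ q0 u))
      simp only [tauF] at this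
      rw [this]
    have hz' : UInv L u (v ++ z) := by
      intro ω
      exact (hz ω).trans (mem_wcat_congr δ q0 α L hα hd ω)
    rcases hc z hz' with h1 | ⟨i, hi, c', hc'⟩
    · left
      exact (upw_mem_congr δ q0 α L hα u hrt).symm.trans h1
    · right
      exact ⟨i, hi, c', ih c' c'.isLt (rt_wrep_congr δ hrt i) hc'⟩

lemma exists_uniform_bound :
    ∃ B : ℕ, ∀ x : List A, (∃ c, ColorAtMost L u c x) → ColorAtMost L u B x := by
  classical
  set mc : ((Q → Q × Set Q) × Bool) → ℕ :=
    fun t => sInf {c | ∃ x : List A, rtF δ x = t ∧ ColorAtMost L u c x} with hmc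
  have hfin : (Set.range mc).Finite := Set.finite_range mc
  obtain ⟨B, hB⟩ := hfin.bddAbove
  refine ⟨B, ?_⟩
  rintro x ⟨c, hc⟩
  have hne : {c | ∃ x' : List A, rtF δ x' = rtF δ x ∧ ColorAtMost L u c x'}.Nonempty :=
    ⟨c, x, rfl, hc⟩
  obtain ⟨x', hx', hcx'⟩ := Nat.sInf_mem hne
  have h1 : ColorAtMost L u (mc (rtF δ x)) x :=
    colorAtMost_congr δ q0 α L hα u _ hx' hcx'
  exact colorAtMost_mono L u (hB (Set.mem_range_self _)) h1

lemma step_lemma (B : ℕ)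
    (hB : ∀ x : List A, (∃ c, ColorAtMost L u c x) → ColorAtMost L u B x)
    {w : List A} (hw : UInv L u w) (hcless : ∀ c, ¬ ColorAtMost L u c w) :
    ∃ w', UInv L u w' ∧ (∀ c, ¬ ColorAtMost L u c w') ∧
      tauF δ (w' ++ w') = tauF δ w' ∧ w' ≠ [] ∧
      ((upw u w' ∈ L) ↔ ¬ (upw u w ∈ L)) ∧ ∃ r, w' = w ++ r := by
  classical
  set c : ℕ := if upw u w ∈ L then 2 * B + 2 else 2 * B + 1 with hcdef
  have hceven : (Even c ↔ upw u w ∈ L) := by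
    by_cases hacc : upw u w ∈ L
    · simp only [hcdef, if_pos hacc]
      exact ⟨fun _ => hacc, fun _ => ⟨B + 1, by ring⟩⟩
    · simp only [hcdef, if_neg hacc]
      constructor
      · intro he
        exfalso
        rcases he with ⟨r, hr⟩
        omega
      · intro h; exact absurd h hacc
  have hBc : B < c := by
    rcases ite_eq_or_eq (upw u w ∈ L) (2*B+2) (2*B+1) with h | h <;> rw [hcdef] <;> omega
  have hnc := hcless c
  rw [ColorAtMost] at hnc
  push_neg at hnc
  obtain ⟨z, hz, hnc2, hnc3⟩ := hnc
  -- hnc2 : (upw u (w++z) ∈ L ∧ ¬Even c) ∨ (upw u (w++z) ∉ L ∧ Even c)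
  -- hnc3 : ∀ i, 0 < i → ∀ c' : Fin c, ¬ColorAtMost L u ↑c' (wrep (w ++ z) i)
  have haccwz : ((upw u (w ++ z) ∈ L) ↔ ¬ (upw u w ∈ L)) := by
    rcases hnc2 with ⟨h1, h2⟩ | ⟨h1, h2⟩
    · constructor
      · intro _; intro hmem; exact h2 (hceven.mpr hmem)
      · intro _; exact h1
    · constructor
      · intro hx; exact absurd hx h1
      · intro hx; exact absurd (hceven.mp h2) hx
  have hwz_ne : w ++ z ≠ [] := by
    intro h0
    obtain ⟨hw0, hz0⟩ := List.append_eq_nil_iff.mp h0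
    subst hw0; subst hz0
    simp only [List.append_nil] at haccwz
    tauto
  have hcolorless : ∀ i, 0 < i → ∀ d, ¬ ColorAtMost L u d (wrep (w ++ z) i) := by
    intro i hi d hd
    have h1 : ColorAtMost L u B (wrep (w ++ z) i) := hB _ ⟨d, hd⟩
    exact hnc3 i hi ⟨B, hBc⟩ h1
  obtain ⟨m, hm, hid⟩ := exists_idem_pow δ (w ++ z)
  refine ⟨wrep (w ++ z) m, uinv_wrep L u hz m, fun d => hcolorless m hm d, hid,
    wrep_ne_nil hwz_ne hm, ?_, ⟨z ++ wrep (w ++ z) (m - 1), ?_⟩⟩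
  · have e1 : upw u (wrep (w ++ z) m) = upw u (w ++ z) := by
      rw [show upw u (wrep (w ++ z) m) = wcat u (wpow (wrep (w ++ z) m)) from rfl,
        wpow_wrep _ hm]
      rfl
    rw [e1]
    exact haccwz
  · rw [show m = (m - 1) + 1 by omega, wrep_succ, List.append_assoc]
    rw [show (m - 1) + 1 - 1 = m - 1 by omega]

end ColorSem
end NatColor
namespace NatColor
set_option linter.unusedSectionVars false

section Chain
variable {A : Type} [Inhabited A] {Q : Type} [Finite Q] (δ : Q → A → Q) (q0 : Q)
  (α : Set (Set Q)) (L : Set (ℕ → A))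
  (hα : ∀ w : ℕ → A, w ∈ L ↔ infSet (runOf δ q0 w) ∈ α)
  (u : List A)
include hα

/-- The crunch: two idempotent words, each reaching the other's type,
have the same acceptance. -/
lemma crunch {a b : List A} (ha : a ≠ []) (hb : b ≠ [])
    (hia : tauF δ (a ++ a) = tauF δ a) (hib : tauF δ (b ++ b) = tauF δ b)
    (hab : ∃ r, b = a ++ r) (hba : ∃ R, tauF δ (b ++ R) = tauF δ a) :
    ((upw u a ∈ L) ↔ (upw u b ∈ L)) := by
  have hef : tauF δ (a ++ b) = tauF δ b := by
    obtain ⟨r, hr⟩ := hab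
    calc tauF δ (a ++ b) = tauF δ (a ++ (a ++ r)) := by rw [hr]
    _ = tauF δ ((a ++ a) ++ r) := by rw [List.append_assoc]
    _ = tauF δ (a ++ r) := tau_append_congr δ hia rfl
    _ = tauF δ b := hr ▸ rfl
  have hfe : tauF δ (b ++ a) = tauF δ a := by
    obtain ⟨R, hR⟩ := hba
    calc tauF δ (b ++ a) = tauF δ (b ++ (b ++ R)) := tau_append_congr δ rfl hR.symm
    _ = tauF δ ((b ++ b) ++ R) := by rw [List.append_assoc]
    _ = tauF δ (b ++ R) := tau_append_congr δ hib rfl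
    _ = tauF δ a := hR
  set qu := dstar δ q0 u with hqu
  set p := dstar δ qu a with hp
  set r := dstar δ qu b with hr
  -- component extraction
  have cef : ∀ q : Q, dstar δ (dstar δ q a) b = dstar δ q b ∧
      vis δ q a ∪ vis δ (dstar δ q a) b = vis δ q b := by
    intro q
    have h1 := congrFun hef q
    constructor
    · have := congrArg Prod.fst h1
      simpa [tauF, dstar_append] using this
    · have := congrArg Prod.snd h1
      simpa [tauF, vis_append] using this
  have cfe : ∀ q : Q, dstar δ (dstar δ q b) a = dstar δ q a ∧
      vis δ q b ∪ vis δ (dstar δ q b) a = vis δ q a := by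
    intro q
    have h1 := congrFun hfe q
    constructor
    · have := congrArg Prod.fst h1
      simpa [tauF, dstar_append] using this
    · have := congrArg Prod.snd h1
      simpa [tauF, vis_append] using this
  have hra : dstar δ r a = p := (cfe qu).1
  have hpb : dstar δ p b = r := (cef qu).1
  have hvrb : vis δ r b = vis δ r a ∪ vis δ p b := by
    have := (cef r).2
    rw [hra] at this
    exact this.symm
  have hvpa : vis δ p a = vis δ p b ∪ vis δ r a := by
    have := (cfe p).2
    rw [hpb] at this
    exact this.symm
  have hveq : vis δ p a = vis δ r b := by
    rw [hvpa, hvrb, Set.union_comm]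
  rw [acc_idem δ q0 α L hα u ha hia, acc_idem δ q0 α L hα u hb hib]
  rw [← hqu, ← hp, ← hr, hveq]

lemma all_colored :
    ∀ w : List A, UInv L u w → ∃ c, ColorAtMost L u c w := by
  by_contra hcon
  push_neg at hcon
  obtain ⟨w0, hw0inv, hw0⟩ := hcon
  obtain ⟨B, hB⟩ := exists_uniform_bound δ q0 α L hα u
  set P : List A → Prop := fun w => UInv L u w ∧ (∀ c, ¬ColorAtMost L u c w) ∧
    tauF δ (w ++ w) = tauF δ w ∧ w ≠ [] with hP
  have hstep : ∀ w : List A, UInv L u w → (∀ c, ¬ColorAtMost L u c w) →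
      ∃ w', P w' ∧ ((upw u w' ∈ L) ↔ ¬(upw u w ∈ L)) ∧ ∃ r, w' = w ++ r := by
    intro w h1 h2
    obtain ⟨w', a, b, c, d, e, f⟩ := step_lemma δ q0 α L hα u B hB h1 h2
    exact ⟨w', ⟨a, b, c, d⟩, e, f⟩
  choose F hF1 hF2 hF3 using fun (w : {w : List A // P w}) =>
    hstep w.1 w.2.1 w.2.2.1
  obtain ⟨w1, hw1P, _, _⟩ := hstep w0 hw0inv hw0
  set G : {w : List A // P w} → {w : List A // P w} := fun w => ⟨F w, hF1 w⟩ with hG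
  set g : ℕ → {w : List A // P w} := fun n => G^[n] ⟨w1, hw1P⟩ with hg
  have hgsucc : ∀ n, g (n + 1) = G (g n) := by
    intro n
    simp only [hg]
    exact Function.iterate_succ_apply' G n _
  have hflip : ∀ n, ((upw u (g (n + 1)).1 ∈ L) ↔ ¬ (upw u (g n).1 ∈ L)) := by
    intro n; rw [hgsucc]; exact hF2 (g n)
  have hext : ∀ n, ∃ r, (g (n + 1)).1 = (g n).1 ++ r := by
    intro n; rw [hgsucc]; exact hF3 (g n)
  have hext2 : ∀ j k, j ≤ k → ∃ r, (g k).1 = (g j).1 ++ r := by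
    intro j k hjk
    induction k, hjk using Nat.le_induction with
    | base => exact ⟨[], (List.append_nil _).symm⟩
    | succ k hk ih =>
      obtain ⟨r, hrr⟩ := ih
      obtain ⟨r', hr'⟩ := hext k
      exact ⟨r ++ r', by rw [hr', hrr, List.append_assoc]⟩
  have key : ∀ j k, j < k → rtF δ (g j).1 = rtF δ (g k).1 → False := by
    intro j k hjk heq
    have hacc : ((upw u (g j).1 ∈ L) ↔ (upw u (g (j+1)).1 ∈ L)) := by
      apply crunch δ q0 α L hα u (g j).2.2.2.2 (g (j+1)).2.2.2.2
        (g j).2.2.2.1 (g (j+1)).2.2.2.1 (hext j)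
      obtain ⟨R, hR⟩ := hext2 (j + 1) k hjk
      refine ⟨R, ?_⟩
      rw [← hR]
      exact (congrArg Prod.fst heq).symm
    have := hflip j
    tauto
  obtain ⟨j, k, hne, heq⟩ :=
    Finite.exists_ne_map_eq_of_infinite (fun n => rtF δ (g n).1)
  rcases lt_or_gt_of_ne hne with hlt | hlt
  · exact key j k hlt heq
  · exact key k j hlt heq.symm

lemma uniform_color : ∃ C : ℕ, ∀ v : List A, ColorAtMost L u C v := by
  obtain ⟨B, hB⟩ := exists_uniform_bound δ q0 α L hα u
  refine ⟨B + 1, ?_⟩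
  intro v
  rw [ColorAtMost]
  intro z hz
  right
  refine ⟨1, one_pos, ⟨B, Nat.lt_succ_self B⟩, ?_⟩
  show ColorAtMost L u B (wrep (v ++ z) 1)
  rw [wrep_one]
  exact hB (v ++ z) (all_colored δ q0 α L hα u (v ++ z) hz)

end Chain
end NatColor

/-- natural colors are monotonically non-increasing under extension. -/
theorem color_mono_nonincreasing {A : Type} [Inhabited A] (L : Set (ℕ → A))
    (hreg : OmegaRegular L) (u v : List A) (hv : v ≠ []) (c : WithBot ℕ)
    (hc : ncol L u v = c) :
    ∀ z : List A, ncol L u (v ++ z) ≤ c := by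
  obtain ⟨Q, instQ, q0, δ, α, hα⟩ := hreg
  haveI := instQ
  obtain ⟨C, hC⟩ := NatColor.uniform_color δ q0 α L hα u
  intro z
  by_cases hrel : URel L u (v ++ z)
  · have hrelv : URel L u v := by
      obtain ⟨z', h⟩ := hrel
      exact ⟨z ++ z', by rwa [List.append_assoc] at h⟩
    rw [← hc]
    unfold ncol
    rw [if_pos hrel, if_pos hrelv]
    have hSv : {c : ℕ | ColorAtMost L u c v}.Nonempty := ⟨C, hC v⟩
    have hm := Nat.sInf_mem hSv
    have h2 : ColorAtMost L u (sInf {c : ℕ | ColorAtMost L u c v}) (v ++ z) :=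
      NatColor.colorAtMost_append L u _ v z hm
    have h3 : sInf {c : ℕ | ColorAtMost L u c (v ++ z)} ≤
        sInf {c : ℕ | ColorAtMost L u c v} := Nat.sInf_le h2
    exact_mod_cast h3
  · rw [← hc]
    unfold ncol
    rw [if_neg hrel]
    exact bot_le
end

section
/- Step-by-step decrease of colors: if the natural color of v with respect to u is c > 1, then there exists z ∈ Σ* such that vz is u-invariant and the natural color of vz with respect to u is exactly c − 1. -/
open scoped Classical

section Aux
variable {A : Type} [Inhabited A] {L : Set (ℕ → A)} {u : List A}

lemma CAM_iff (c : ℕ) (v : List A) : ColorAtMost L u c v ↔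
    ∀ z : List A, UInv L u (v ++ z) →
      ((upw u (v ++ z) ∈ L ↔ Even c) ∨
        ∃ i : ℕ, 0 < i ∧ ∃ c' : Fin c, ColorAtMost L u c' (wrep (v ++ z) i)) := by
  rw [ColorAtMost]

lemma wcat_append_s3 (x a : List A) (f : ℕ → A) : wcat (x ++ a) f = wcat x (wcat a f) := by
  funext n
  simp only [wcat, List.length_append]
  by_cases h1 : n < x.length
  · simp only [show n < x.length + a.length by omega, dif_pos, h1]
    exact List.getElem_append_left h1
  · by_cases h2 : n < x.length + a.length
    · simp only [h2, dif_pos, h1, dif_neg, not_false_iff, show n - x.length < a.length by omega]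
      exact List.getElem_append_right (by omega)
    · simp [h1, h2, show ¬ (n - x.length < a.length) by omega, Nat.sub_sub]

end Aux
set_option linter.unusedSectionVars false

section Aux2
variable {A : Type} [Inhabited A] {L : Set (ℕ → A)} {u : List A}

lemma simL_refl (x : List A) : simL L x x := fun _ => Iff.rfl

lemma simL_trans {x y z : List A} (h1 : simL L x y) (h2 : simL L y z) : simL L x z :=
  fun w => (h1 w).trans (h2 w)

lemma simL_append_right {x y : List A} (h : simL L x y) (a : List A) :
    simL L (x ++ a) (y ++ a) := by
  intro w
  rw [wcat_append_s3, wcat_append_s3]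
  exact h _

lemma wrep_zero (w : List A) : wrep w 0 = [] := rfl

lemma wrep_succ (w : List A) (i : ℕ) : wrep w (i + 1) = w ++ wrep w i := by
  simp only [wrep, List.replicate_succ, List.flatten_cons]

lemma wrep_one (w : List A) : wrep w 1 = w := by simp [wrep]

lemma wrep_add (w : List A) (a b : ℕ) : wrep w (a + b) = wrep w a ++ wrep w b := by
  simp only [wrep, List.replicate_add, List.flatten_append]

lemma wrep_mul (w : List A) (a b : ℕ) : wrep (wrep w a) b = wrep w (a * b) := by
  induction b with
  | zero => simp [wrep]
  | succ b ih =>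
      rw [wrep_succ, ih, ← wrep_add]
      ring_nf

lemma UInv_wrep {w : List A} (h : UInv L u w) : ∀ i : ℕ, UInv L u (wrep w i) := by
  intro i
  induction i with
  | zero => simpa [UInv, wrep_zero] using simL_refl u
  | succ i ih =>
      have h2 : simL L (u ++ wrep w i) ((u ++ w) ++ wrep w i) := simL_append_right h _
      have h3 : simL L u ((u ++ w) ++ wrep w i) := simL_trans ih h2
      simpa [UInv, wrep_succ, List.append_assoc] using h3

lemma length_wrep (w : List A) (i : ℕ) : (wrep w i).length = i * w.length := by
  induction i with
  | zero => simp [wrep]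
  | succ i ih => rw [wrep_succ]; simp [ih]; ring

lemma getD_wrep (w : List A) (d : A) : ∀ (k m : ℕ), m < k * w.length →
    (wrep w k).getD m d = w.getD (m % w.length) d := by
  intro k
  induction k with
  | zero => intro m hm; omega
  | succ k ih =>
      intro m hm
      rw [wrep_succ]
      by_cases h1 : m < w.length
      · rw [List.getD_append _ _ _ _ h1, Nat.mod_eq_of_lt h1]
      · have hle : w.length ≤ m := by omega
        have hmul : (k+1) * w.length = k * w.length + w.length := by ring
        rw [List.getD_append_right _ _ _ _ hle, ih _ (by omega)]
        conv_rhs => rw [show m = (m - w.length) + w.length by omega]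
        rw [Nat.add_mod_right]

lemma wpow_wrep {w : List A} (hw : w ≠ []) (k : ℕ) (hk : 0 < k) :
    wpow (wrep w k) = wpow w := by
  funext n
  have hlen : 0 < w.length := List.length_pos_iff.mpr hw
  have hklen : (wrep w k).length = k * w.length := length_wrep w k
  simp only [wpow, hklen]
  rw [getD_wrep w default k _ (Nat.mod_lt _ (by positivity))]
  congr 1
  rw [Nat.mod_mod_of_dvd n ⟨k, by ring⟩]

lemma upw_wrep {w : List A} (hw : w ≠ []) (k : ℕ) (hk : 0 < k) (x : List A) :
    upw x (wrep w k) = upw x w := by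
  rw [upw, upw, wpow_wrep hw k hk]

end Aux2
section Aux3
variable {A : Type} [Inhabited A] {L : Set (ℕ → A)} {u : List A}

/-- The color as a natural number (meaningful when the set is nonempty). -/
noncomputable def colN (L : Set (ℕ → A)) (u x : List A) : ℕ :=
  sInf {c : ℕ | ColorAtMost L u c x}

lemma CAM_mono {c : ℕ} {v : List A} (h : ColorAtMost L u c v) (s : List A) :
    ColorAtMost L u c (v ++ s) := by
  rw [CAM_iff] at h ⊢
  intro z hz
  have := h (s ++ z) (by rwa [← List.append_assoc])
  rwa [← List.append_assoc] at this

lemma ncol_eq {x : List A} (h : UInv L u x) :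
    ncol L u x = ((colN L u x : ℕ) : WithBot ℕ) := by
  have hrel : URel L u x := ⟨[], by simpa [List.append_nil] using h⟩
  simp [ncol, hrel, colN]

end Aux3
section Aux4
variable {A : Type} [Inhabited A] {L : Set (ℕ → A)} {u : List A}

lemma ext_wrep {v w : List A} (h : ∃ s, w = v ++ s) (i : ℕ) :
    ∃ s, wrep w (i + 1) = v ++ s := by
  obtain ⟨s, rfl⟩ := h
  exact ⟨s ++ wrep (v ++ s) i, by rw [wrep_succ, List.append_assoc]⟩

lemma colN_mem {x : List A} {c : ℕ} (h : ColorAtMost L u c x) :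
    ColorAtMost L u (colN L u x) x :=
  Nat.sInf_mem (⟨c, h⟩ : Set.Nonempty {n : ℕ | ColorAtMost L u n x})

/-- Choose a power of `w` of minimal color. -/
lemma exists_min_power (L : Set (ℕ → A)) (u w : List A) :
    ∃ i₀ : ℕ, ∀ k : ℕ, colN L u (wrep w (i₀ + 1)) ≤ colN L u (wrep w (k + 1)) := by
  have hne : (Set.range fun k : ℕ => colN L u (wrep w (k + 1))).Nonempty := ⟨_, ⟨0, rfl⟩⟩
  obtain ⟨i₀, hi₀⟩ := Nat.sInf_mem hne
  have hi₀' : colN L u (wrep w (i₀ + 1)) = sInf (Set.range fun k : ℕ => colN L u (wrep w (k + 1))) := hi₀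
  exact ⟨i₀, fun k => by rw [hi₀']; exact Nat.sInf_le ⟨k, rfl⟩⟩

/-- A power of minimal color has parity matching its color. -/
lemma parity_of_min_power {c : ℕ} {v : List A} (hCAMv : ColorAtMost L u c v)
    {w : List A} (hwinv : UInv L u w) (hext : ∃ s, w = v ++ s) (i₀ : ℕ)
    (hmin : ∀ k : ℕ, colN L u (wrep w (i₀ + 1)) ≤ colN L u (wrep w (k + 1))) :
    upw u (wrep w (i₀ + 1)) ∈ L ↔ Even (colN L u (wrep w (i₀ + 1))) := by
  obtain ⟨s, hs⟩ := ext_wrep hext i₀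
  have hCAMW : ColorAtMost L u c (wrep w (i₀ + 1)) := by rw [hs]; exact CAM_mono hCAMv s
  have hmem := colN_mem hCAMW
  have happ := (CAM_iff _ _).mp hmem [] (by simpa [List.append_nil] using UInv_wrep hwinv (i₀ + 1))
  rw [List.append_nil] at happ
  rcases happ with h | ⟨i, hi, c', hc'⟩
  · exact h
  · exfalso
    have h1 : wrep (wrep w (i₀ + 1)) i = wrep w ((i₀ + 1) * i) := wrep_mul w (i₀ + 1) i
    have h2 : colN L u (wrep (wrep w (i₀ + 1)) i) ≤ (c' : ℕ) := Nat.sInf_le hc'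
    have hpos : 0 < (i₀ + 1) * i := Nat.mul_pos (Nat.succ_pos _) hi
    obtain ⟨k, hk⟩ : ∃ k, (i₀ + 1) * i = k + 1 := ⟨(i₀ + 1) * i - 1, by omega⟩
    have h3 := hmin k
    rw [← hk, ← h1] at h3
    have hlt := c'.isLt
    omega

end Aux4
/-- step-by-step decrease of colors. -/
theorem color_step_by_step {A : Type} [Inhabited A] (L : Set (ℕ → A))
    (hreg : OmegaRegular L) (u v : List A) (hv : v ≠ []) (c : ℕ)
    (hc : ncol L u v = (c : WithBot ℕ)) (h1 : 1 < c) :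
    ∃ z : List A, UInv L u (v ++ z) ∧ ncol L u (v ++ z) = ((c - 1 : ℕ) : WithBot ℕ) := by
  have hc2 : 2 ≤ c := h1
  have hURel : URel L u v := by
    by_contra h
    rw [ncol, if_neg h] at hc
    exact absurd hc (by simp)
  have hsInf : colN L u v = c := by
    rw [ncol, if_pos hURel] at hc
    exact_mod_cast hc
  have hCAMv : ColorAtMost L u c v := by
    have hne : {n : ℕ | ColorAtMost L u n v}.Nonempty := by
      by_contra h
      rw [Set.not_nonempty_iff_eq_empty] at h
      have h0 : colN L u v = 0 := by rw [colN, h]; exact Nat.sInf_empty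
      omega
    have hmem := Nat.sInf_mem hne
    have he : sInf {n : ℕ | ColorAtMost L u n v} = c := hsInf
    rwa [he] at hmem
  have hub : ∀ {x : List A}, (∃ s, x = v ++ s) → colN L u x ≤ c := by
    rintro x ⟨s, rfl⟩; exact Nat.sInf_le (CAM_mono hCAMv s)
  -- Step 1: negate ColorAtMost (c-1) for v
  have hnot1 : ¬ ColorAtMost L u (c - 1) v := by
    intro h
    have h2 : colN L u v ≤ c - 1 := Nat.sInf_le h
    omega
  rw [CAM_iff] at hnot1
  push_neg at hnot1
  obtain ⟨z₀, hz₀inv, hpar₀, hpow₀⟩ := hnot1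
  have hextw : ∃ s, v ++ z₀ = v ++ s := ⟨z₀, rfl⟩
  have hlow1 : ∀ k : ℕ, c - 1 ≤ colN L u (wrep (v ++ z₀) (k + 1)) := by
    intro k
    by_contra hlt
    push_neg at hlt
    obtain ⟨s, hs⟩ := ext_wrep hextw k
    have hcam := colN_mem (show ColorAtMost L u c (wrep (v ++ z₀) (k + 1)) by
      rw [hs]; exact CAM_mono hCAMv s)
    exact hpow₀ (k + 1) (Nat.succ_pos k) ⟨_, hlt⟩ hcam
  obtain ⟨i₀, hmin1⟩ := exists_min_power L u (v ++ z₀)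
  have hm1_ub : colN L u (wrep (v ++ z₀) (i₀ + 1)) ≤ c := hub (ext_wrep hextw i₀)
  have hm1_lb := hlow1 i₀
  rcases (show colN L u (wrep (v ++ z₀) (i₀ + 1)) = c - 1 ∨
      colN L u (wrep (v ++ z₀) (i₀ + 1)) = c by omega) with hcase | hcase
  · -- the minimal power already has color c - 1
    obtain ⟨s, hs⟩ := ext_wrep hextw i₀
    refine ⟨s, ?_, ?_⟩
    · rw [← hs]; exact UInv_wrep hz₀inv _
    · rw [← hs, ncol_eq (UInv_wrep hz₀inv _), hcase]
  · -- the minimal power has color c; descend using ¬ ColorAtMost (c-2)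
    set W1 := wrep (v ++ z₀) (i₀ + 1) with hW1def
    have hW1inv : UInv L u W1 := UInv_wrep hz₀inv _
    have hnot2 : ¬ ColorAtMost L u (c - 2) W1 := by
      intro h
      have h2 : colN L u W1 ≤ c - 2 := Nat.sInf_le h
      omega
    rw [CAM_iff] at hnot2
    push_neg at hnot2
    obtain ⟨y, hyinv, hpar, hpow⟩ := hnot2
    have hextW2 : ∃ s, W1 ++ y = v ++ s := by
      obtain ⟨s, hs⟩ := ext_wrep hextw i₀
      exact ⟨s ++ y, by rw [hW1def, hs, List.append_assoc]⟩
    have hlow2 : ∀ k : ℕ, c - 2 ≤ colN L u (wrep (W1 ++ y) (k + 1)) := by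
      intro k
      by_contra hlt
      push_neg at hlt
      obtain ⟨s, hs⟩ := ext_wrep hextW2 k
      have hcam := colN_mem (show ColorAtMost L u c (wrep (W1 ++ y) (k + 1)) by
        rw [hs]; exact CAM_mono hCAMv s)
      exact hpow (k + 1) (Nat.succ_pos k) ⟨_, hlt⟩ hcam
    obtain ⟨j₀, hmin2⟩ := exists_min_power L u (W1 ++ y)
    have hm2_ub : colN L u (wrep (W1 ++ y) (j₀ + 1)) ≤ c := hub (ext_wrep hextW2 j₀)
    have hm2_lb := hlow2 j₀
    have hpar2 : upw u (wrep (W1 ++ y) (j₀ + 1)) ∈ L ↔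
        Even (colN L u (wrep (W1 ++ y) (j₀ + 1))) :=
      parity_of_min_power hCAMv hyinv hextW2 j₀ hmin2
    have hne' : W1 ++ y ≠ [] := by
      obtain ⟨s, hs⟩ := hextW2
      rw [hs]
      simp [hv]
    rw [upw_wrep hne' (j₀ + 1) (Nat.succ_pos _)] at hpar2
    have hm2 : colN L u (wrep (W1 ++ y) (j₀ + 1)) = c - 1 := by
      rcases hpar with ⟨hin, hnev⟩ | ⟨hnin, hev⟩
      · have he : Even (colN L u (wrep (W1 ++ y) (j₀ + 1))) := hpar2.mp hin
        rw [Nat.even_iff] at he hnev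
        omega
      · have hne : ¬ Even (colN L u (wrep (W1 ++ y) (j₀ + 1))) := fun h => hnin (hpar2.mpr h)
        rw [Nat.even_iff] at hne hev
        omega
    obtain ⟨s, hs⟩ := ext_wrep hextW2 j₀
    refine ⟨s, ?_, ?_⟩
    · rw [← hs]; exact UInv_wrep hyinv _
    · rw [← hs, ncol_eq (UInv_wrep hyinv _), hm2]
end

section
/- Reliable periods determine membership: if v is u-reliable, then the natural color of v with respect to u is even if and only if u·v^ω ∈ L. -/
open scoped Classical

namespace NatCol

variable {A : Type}

theorem wcat_append (x y : List A) (w : ℕ → A) :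
    wcat (x ++ y) w = wcat x (wcat y w) := by
  funext n
  simp only [wcat, List.length_append, List.get_eq_getElem]
  split_ifs with h1 h2 h3 h4 h5 <;> try omega
  · exact List.getElem_append_left h2
  · rw [List.getElem_append_right (by omega)]
  · congr 1; omega

theorem wrep_zero (x : List A) : wrep x 0 = [] := rfl

theorem wrep_succ (x : List A) (j : ℕ) : wrep x (j + 1) = x ++ wrep x j := by
  simp [wrep, List.replicate_succ]

theorem wrep_add (x : List A) (m n : ℕ) : wrep x (m + n) = wrep x m ++ wrep x n := by
  induction m with
  | zero => simp [wrep_zero]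
  | succ k ih => rw [Nat.succ_add, wrep_succ, wrep_succ, ih, List.append_assoc]

theorem length_wrep (x : List A) (j : ℕ) : (wrep x j).length = j * x.length := by
  induction j with
  | zero => simp [wrep_zero]
  | succ k ih => rw [wrep_succ, List.length_append, ih]; ring

theorem getD_wrep (x : List A) (d : A) :
    ∀ j r, r < j * x.length → (wrep x j).getD r d = x.getD (r % x.length) d := by
  intro j
  induction j with
  | zero => intro r hr; omega
  | succ k ih =>
    intro r hr
    rw [wrep_succ]
    rcases lt_or_ge r x.length with h | h
    · rw [List.getD_append _ _ _ _ h, Nat.mod_eq_of_lt h]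
    · have h3 : (k+1)*x.length = k*x.length + x.length := by ring
      rw [List.getD_append_right _ _ _ _ h, ih _ (by omega)]
      congr 1
      conv_rhs => rw [show r = (r - x.length) + x.length by omega, Nat.add_mod_right]

theorem wpow_wrep [Inhabited A] (x : List A) (hx : x ≠ []) (j : ℕ) (hj : 0 < j) :
    wpow (wrep x j) = wpow x := by
  have hlx : 0 < x.length := List.length_pos_iff.2 hx
  funext n
  simp only [wpow, length_wrep]
  have hpos : 0 < j * x.length := by positivity
  rw [getD_wrep _ _ _ _ (Nat.mod_lt _ hpos), Nat.mod_mod_of_dvd _ ⟨j, by ring⟩]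

theorem upw_wrep [Inhabited A] (u x : List A) (hx : x ≠ []) (j : ℕ) (hj : 0 < j) :
    upw u (wrep x j) = upw u x := by
  unfold upw; rw [wpow_wrep x hx j hj]

theorem wpow_rot [Inhabited A] (x y : List A) (hx : x ≠ []) :
    wpow (x ++ y) = wcat x (wpow (y ++ x)) := by
  have hlx : 0 < x.length := List.length_pos_iff.2 hx
  funext n
  set lx := x.length with hlxd
  set ly := y.length with hlyd
  set s := lx + ly with hs
  have hspos : 0 < s := by omega
  simp only [wpow, wcat, List.length_append, List.get_eq_getElem]
  rcases lt_or_ge n lx with h | h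
  · rw [dif_pos h]
    rw [← hs, Nat.mod_eq_of_lt (by omega), List.getD_append _ _ _ _ h]
    exact List.getD_eq_getElem _ _ h
  · rw [dif_neg (by omega)]
    set m := n - lx with hm
    set r := m % s with hrd
    have hr : r < s := Nat.mod_lt _ hspos
    have e1 : n = (r + lx) + s * (m / s) := by
      have := Nat.mod_add_div m s; omega
    have hly : ly + lx = s := by omega
    rw [← hs, hly, e1, Nat.add_mul_mod_self_left, ← hrd]
    rcases lt_or_ge (r + lx) s with h2 | h2
    · rw [Nat.mod_eq_of_lt h2, List.getD_append_right _ _ _ _ (by omega),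
        List.getD_append _ _ _ _ (by omega)]
      congr 1; omega
    · rw [Nat.mod_eq_sub_mod h2, Nat.mod_eq_of_lt (by omega),
        List.getD_append _ _ _ _ (by omega),
        List.getD_append_right _ _ _ _ (by omega)]
      congr 1; omega

theorem simL_refl (L : Set (ℕ → A)) (x : List A) : simL L x x := fun _ => Iff.rfl

theorem simL_trans {L : Set (ℕ → A)} {x y z : List A} (h1 : simL L x y)
    (h2 : simL L y z) : simL L x z := fun w => (h1 w).trans (h2 w)

theorem simL_append {L : Set (ℕ → A)} {x y : List A} (h : simL L x y) (t : List A) :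
    simL L (x ++ t) (y ++ t) := by
  intro w
  rw [wcat_append, wcat_append]
  exact h _

theorem UInv_wrep {L : Set (ℕ → A)} {u x : List A} (h : UInv L u x) (j : ℕ) :
    UInv L u (wrep x j) := by
  induction j with
  | zero => rw [wrep_zero]; unfold UInv; rw [List.append_nil]; exact simL_refl L u
  | succ k ih =>
    rw [wrep_succ]
    have h2 := simL_append h (wrep x k)
    have h3 := simL_trans ih h2
    unfold UInv
    rwa [List.append_assoc] at h3


variable {A Q : Type}

def dstar (δ : Q → A → Q) (q : Q) (x : List A) : Q := x.foldl δ q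

def dvis (δ : Q → A → Q) (q : Q) (x : List A) : Set Q :=
  {p | ∃ j, j < x.length ∧ p = dstar δ q (x.take j)}

def Mt (δ : Q → A → Q) (x : List A) : (Q → Q) × (Q → Set Q) :=
  (fun q => dstar δ q x, fun q => dvis δ q x)

theorem dstar_append (δ : Q → A → Q) (q : Q) (x y : List A) :
    dstar δ q (x ++ y) = dstar δ (dstar δ q x) y := List.foldl_append

theorem dvis_append (δ : Q → A → Q) (q : Q) (x y : List A) :
    dvis δ q (x ++ y) = dvis δ q x ∪ dvis δ (dstar δ q x) y := by
  ext p
  simp only [dvis, Set.mem_setOf_eq, Set.mem_union, List.length_append]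
  constructor
  · rintro ⟨j, hj, rfl⟩
    rcases lt_or_ge j x.length with h | h
    · left; exact ⟨j, h, by rw [List.take_append,
        Nat.sub_eq_zero_of_le (le_of_lt h), List.take_zero, List.append_nil]⟩
    · right
      refine ⟨j - x.length, by omega, ?_⟩
      rw [List.take_append, List.take_of_length_le h, dstar_append]
  · rintro (⟨j, hj, rfl⟩ | ⟨j, hj, rfl⟩)
    · refine ⟨j, by omega, ?_⟩
      rw [List.take_append,
        Nat.sub_eq_zero_of_le (le_of_lt hj), List.take_zero, List.append_nil]
    · refine ⟨x.length + j, by omega, ?_⟩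
      rw [List.take_append,
        List.take_of_length_le (by omega : x.length ≤ x.length + j),
        dstar_append]
      congr 2
      omega

theorem Mt_fst (δ : Q → A → Q) {x y : List A} (h : Mt δ x = Mt δ y) (q : Q) :
    dstar δ q x = dstar δ q y := congrFun (congrArg Prod.fst h) q

theorem Mt_append_congr (δ : Q → A → Q) {x y : List A} (h : Mt δ x = Mt δ y)
    (t : List A) : Mt δ (x ++ t) = Mt δ (y ++ t) := by
  have h1 := congrArg Prod.fst h
  have h2 := congrArg Prod.snd h
  simp only [Mt] at h1 h2 ⊢
  simp only [Prod.mk.injEq]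
  refine ⟨?_, ?_⟩
  · funext q; rw [dstar_append, dstar_append, congrFun h1 q]
  · funext q
    rw [dvis_append, dvis_append, congrFun h2 q, congrFun h1 q]

theorem runOf_shift (δ : Q → A → Q) (q : Q) (w : ℕ → A) (m : ℕ) :
    ∀ n, runOf δ q w (m + n) = runOf δ (runOf δ q w m) (fun i => w (m + i)) n := by
  intro n
  induction n with
  | zero => rfl
  | succ k ih => rw [← Nat.add_assoc, runOf, runOf, ih]

theorem runOf_list [Inhabited A] (δ : Q → A → Q) (x : List A) (W : ℕ → A)
    (hW : ∀ i, i < x.length → W i = x.getD i default) (q : Q) :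
    ∀ j, j ≤ x.length → runOf δ q W j = dstar δ q (x.take j) := by
  intro j
  induction j with
  | zero => intro _; simp [runOf, dstar]
  | succ k ih =>
    intro hk
    have hklt : k < x.length := by omega
    rw [runOf, ih (by omega), hW k hklt, ← List.take_concat_get' x k hklt,
      dstar_append]
    simp [dstar, List.getD_eq_getElem _ _ hklt, List.getElem?_eq_getElem hklt]

theorem freq_pigeonhole [Finite Q] (f : ℕ → Q) (R : ℕ → Prop)
    (h : ∀ n, ∃ k, n ≤ k ∧ R k) :
    ∃ q, ∀ n, ∃ k, n ≤ k ∧ R k ∧ f k = q := by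
  by_contra hc
  push_neg at hc
  choose nq hq using hc
  cases nonempty_fintype Q
  set N := Finset.univ.sup nq with hN
  obtain ⟨k, hk, hRk⟩ := h N
  exact hq (f k) k (le_trans (Finset.le_sup (Finset.mem_univ (f k))) hk) hRk rfl

section B
variable [Inhabited A] (δ : Q → A → Q)

theorem runOf_wpow_blk (x : List A) (q : Q) (k : ℕ) :
    ∀ j, j ≤ x.length →
    runOf δ q (wpow x) (k * x.length + j)
      = dstar δ (runOf δ q (wpow x) (k * x.length)) (x.take j) := by
  intro j hj
  rw [runOf_shift]
  refine runOf_list δ x _ (fun i hi => ?_) _ j hj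
  show wpow x (k * x.length + i) = _
  simp only [wpow]
  rw [Nat.add_comm (k * x.length) i, Nat.add_mul_mod_self_right, Nat.mod_eq_of_lt hi]

theorem runOf_wpow_mul (x : List A) (q : Q) :
    ∀ k, runOf δ q (wpow x) (k * x.length) = (fun p => dstar δ p x)^[k] q := by
  intro k
  induction k with
  | zero => rw [Nat.zero_mul]; rfl
  | succ m ih =>
    rw [show (m+1) * x.length = m * x.length + x.length by ring,
      runOf_wpow_blk δ x q m x.length le_rfl, List.take_length, ih,
      Function.iterate_succ_apply']

theorem runOf_wpow_eq (x : List A) (hx : x ≠ []) (q : Q) (n : ℕ) :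
    runOf δ q (wpow x) n
      = dstar δ ((fun p => dstar δ p x)^[n / x.length] q) (x.take (n % x.length)) := by
  have hlen : 0 < x.length := List.length_pos_iff.2 hx
  conv_lhs => rw [show n = (n / x.length) * x.length + n % x.length by
    rw [Nat.div_add_mod' n x.length]]
  rw [runOf_wpow_blk δ x q _ _ (le_of_lt (Nat.mod_lt _ hlen)), runOf_wpow_mul]

theorem infSet_wpow (x : List A) (hx : x ≠ []) (q : Q) [Finite Q] :
    infSet (runOf δ q (wpow x))
      = {p | ∃ q', (∀ n, ∃ k, n ≤ k ∧ (fun p => dstar δ p x)^[k] q = q')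
          ∧ p ∈ dvis δ q' x} := by
  have hlen : 0 < x.length := List.length_pos_iff.2 hx
  set itf := fun p => dstar δ p x with hitf
  ext p
  constructor
  · intro hp
    have hR : ∀ n, ∃ k, n ≤ k ∧ p ∈ dvis δ (itf^[k] q) x := by
      intro n
      obtain ⟨m, hm, hrm⟩ := hp (n * x.length)
      refine ⟨m / x.length, ?_, ?_⟩
      · exact (Nat.le_div_iff_mul_le hlen).2 hm
      · rw [runOf_wpow_eq δ x hx q m] at hrm
        exact ⟨m % x.length, Nat.mod_lt _ hlen, hrm.symm⟩
    obtain ⟨q', hq'⟩ := freq_pigeonhole (fun k => itf^[k] q)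
      (fun k => p ∈ dvis δ (itf^[k] q) x) hR
    refine ⟨q', fun n => ?_, ?_⟩
    · obtain ⟨k, hk, _, hfk⟩ := hq' n
      exact ⟨k, hk, hfk⟩
    · obtain ⟨k, _, hmem, hfk⟩ := hq' 0
      rwa [hfk] at hmem
  · rintro ⟨q', hrec, j, hj, rfl⟩
    intro n
    obtain ⟨k, hk, hfk⟩ := hrec n
    refine ⟨k * x.length + j, by nlinarith, ?_⟩
    rw [runOf_wpow_blk δ x q k j (le_of_lt hj), runOf_wpow_mul, hfk]

theorem infSet_shift {r : ℕ → Q} (c : ℕ) :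
    infSet (fun n => r (c + n)) = infSet r := by
  ext p
  constructor
  · intro hp n
    obtain ⟨m, hm, he⟩ := hp n
    exact ⟨c + m, by omega, he⟩
  · intro hp n
    obtain ⟨m, hm, he⟩ := hp (c + n)
    refine ⟨m - c, by omega, ?_⟩
    show r (c + (m - c)) = p
    rw [show c + (m - c) = m by omega]; exact he

theorem runOf_wcat (q0 : Q) (u : List A) (W : ℕ → A) (n : ℕ) :
    runOf δ q0 (wcat u W) (u.length + n) = runOf δ (dstar δ q0 u) W n := by
  have hbase : runOf δ q0 (wcat u W) u.length = dstar δ q0 u := by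
    have := runOf_list δ u (wcat u W) (fun i hi => by
      simp [wcat, dif_pos hi, List.getD_eq_getElem _ _ hi,
        List.getElem?_eq_getElem hi]) q0 u.length le_rfl
    rwa [List.take_length] at this
  rw [runOf_shift, hbase]
  congr 1
  funext i
  simp [wcat]

theorem infSet_upw (q0 : Q) (u x : List A) :
    infSet (runOf δ q0 (wcat u (wpow x)))
      = infSet (runOf δ (dstar δ q0 u) (wpow x)) := by
  rw [← infSet_shift (r := runOf δ q0 (wcat u (wpow x))) u.length]
  have he : (fun n => runOf δ q0 (wcat u (wpow x)) (u.length + n))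
      = runOf δ (dstar δ q0 u) (wpow x) := by
    funext n; exact runOf_wcat δ q0 u (wpow x) n
  rw [he]

theorem infSet_type_det [Finite Q] (q : Q) {x y : List A} (hx : x ≠ []) (hy : y ≠ [])
    (h : Mt δ x = Mt δ y) :
    infSet (runOf δ q (wpow x)) = infSet (runOf δ q (wpow y)) := by
  have h1 : (fun p => dstar δ p x) = (fun p => dstar δ p y) := congrArg Prod.fst h
  have h2 : (fun p => dvis δ p x) = (fun p => dvis δ p y) := congrArg Prod.snd h
  rw [infSet_wpow δ x hx q, infSet_wpow δ y hy q, h1]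
  ext p
  simp only [Set.mem_setOf_eq]
  constructor <;> rintro ⟨q', ha, hb⟩ <;> exact ⟨q', ha, by
    first
    | (rw [congrFun h2 q']; exact hb)
    | (rw [← congrFun h2 q']; exact hb)⟩

end B

end NatCol
section Part3
open NatCol
variable {A Q : Type} [Inhabited A] [Fintype Q]

theorem NatCol.colorAtMost_unfold (L : Set (ℕ → A)) (u : List A) (c : ℕ) (v : List A) :
    ColorAtMost L u c v ↔ ∀ z : List A, UInv L u (v ++ z) →
      ((upw u (v ++ z) ∈ L ↔ Even c) ∨
        ∃ i : ℕ, 0 < i ∧ ∃ c' : Fin c, ColorAtMost L u c' (wrep (v ++ z) i)) := by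
  rw [ColorAtMost]

theorem NatCol.append_ne_nil {a b : List A} (ha : a ≠ []) : a ++ b ≠ [] :=
  fun h => ha (List.append_eq_nil_iff.mp h).1

theorem NatCol.Mt_append_congr_left (δ : Q → A → Q) {x y : List A}
    (h : Mt δ x = Mt δ y) (t : List A) : Mt δ (t ++ x) = Mt δ (t ++ y) := by
  have h1 := congrArg Prod.fst h
  have h2 := congrArg Prod.snd h
  simp only [Mt] at h1 h2 ⊢
  simp only [Prod.mk.injEq]
  refine ⟨?_, ?_⟩
  · funext q
    rw [dstar_append, dstar_append]
    exact congrFun h1 (dstar δ q t)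
  · funext q
    rw [dvis_append, dvis_append, congrFun h2 (dstar δ q t)]

theorem NatCol.g_det {L : Set (ℕ → A)} {δ : Q → A → Q} {q0 : Q} {α : Set (Set Q)}
    (hL : ∀ w : ℕ → A, w ∈ L ↔ infSet (runOf δ q0 w) ∈ α) (u : List A)
    {x y : List A} (hx : x ≠ []) (hy : y ≠ []) (h : Mt δ x = Mt δ y) :
    (upw u x ∈ L ↔ upw u y ∈ L) := by
  rw [hL, hL]
  show infSet (runOf δ q0 (wcat u (wpow x))) ∈ α ↔
    infSet (runOf δ q0 (wcat u (wpow y))) ∈ α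
  rw [infSet_upw, infSet_upw, infSet_type_det δ (dstar δ q0 u) hx hy h]

theorem NatCol.glem {L : Set (ℕ → A)} {δ : Q → A → Q} {q0 : Q} {α : Set (Set Q)}
    (hL : ∀ w : ℕ → A, w ∈ L ↔ infSet (runOf δ q0 w) ∈ α) (u : List A)
    {y y' : List A} (hyne : y ≠ []) (hy'ne : y' ≠ [])
    (hyI : UInv L u y) (hy'I : UInv L u y')
    (hid : Mt δ (y ++ y) = Mt δ y) (hid' : Mt δ (y' ++ y') = Mt δ y')
    (h1 : ∃ s, Mt δ (y ++ s) = Mt δ y') (h2 : ∃ s, Mt δ (y' ++ s) = Mt δ y) :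
    (upw u y ∈ L ↔ upw u y' ∈ L) := by
  obtain ⟨s, hs⟩ := h1
  obtain ⟨t, ht⟩ := h2
  have hef : Mt δ (y ++ y') = Mt δ y' := by
    calc Mt δ (y ++ y') = Mt δ (y ++ (y ++ s)) := (Mt_append_congr_left δ hs y).symm
    _ = Mt δ ((y ++ y) ++ s) := by rw [List.append_assoc]
    _ = Mt δ (y ++ s) := Mt_append_congr δ hid s
    _ = Mt δ y' := hs
  have hfe : Mt δ (y' ++ y) = Mt δ y := by
    calc Mt δ (y' ++ y) = Mt δ (y' ++ (y' ++ t)) := (Mt_append_congr_left δ ht y').symm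
    _ = Mt δ ((y' ++ y') ++ t) := by rw [List.append_assoc]
    _ = Mt δ (y' ++ t) := Mt_append_congr δ hid' t
    _ = Mt δ y := ht
  have key : upw u (y' ++ y) ∈ L ↔ upw u (y ++ y') ∈ L := by
    have e1 : upw u (y' ++ y) = wcat (u ++ y') (wpow (y ++ y')) := by
      show wcat u (wpow (y' ++ y)) = _
      rw [wpow_rot y' y hy'ne, ← wcat_append]
    rw [e1]
    exact (hy'I (wpow (y ++ y'))).symm
  calc upw u y ∈ L
      ↔ upw u (y' ++ y) ∈ L := (g_det hL u (append_ne_nil hy'ne) hyne hfe).symm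
    _ ↔ upw u (y ++ y') ∈ L := key
    _ ↔ upw u y' ∈ L := g_det hL u (append_ne_nil hyne) hy'ne hef

theorem NatCol.ex_idem_aux (δ : Q → A → Q) (x : List A) {a b : ℕ} (ha : 0 < a)
    (hab : a < b) (h0 : Mt δ (wrep x a) = Mt δ (wrep x b)) :
    ∃ j, 0 < j ∧ Mt δ (wrep x j ++ wrep x j) = Mt δ (wrep x j) := by
  set p := b - a with hp
  have hppos : 0 < p := by omega
  have step : ∀ n, a ≤ n → Mt δ (wrep x (n + p)) = Mt δ (wrep x n) := by
    intro n hn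
    have e : n + p = (n - a) + b := by omega
    rw [e, wrep_add, ← Mt_append_congr_left δ h0 (wrep x (n - a)), ← wrep_add,
      show n - a + a = n by omega]
  have iter : ∀ m n, a ≤ n → Mt δ (wrep x (n + m * p)) = Mt δ (wrep x n) := by
    intro m
    induction m with
    | zero => intro n _; rw [Nat.zero_mul, Nat.add_zero]
    | succ k ihm =>
      intro n hn
      have e : n + (k + 1) * p = (n + p) + k * p := by ring
      rw [e, ihm (n + p) (by omega), step n hn]
  refine ⟨a * p, by positivity, ?_⟩
  rw [← wrep_add]
  have e : a * p + a * p = (a * p) + a * p := rfl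
  rw [iter a (a * p) (by nlinarith)]

theorem NatCol.ex_idem (δ : Q → A → Q) (x : List A) :
    ∃ j, 0 < j ∧ Mt δ (wrep x j ++ wrep x j) = Mt δ (wrep x j) := by
  obtain ⟨a, b, hab, heq⟩ :=
    Finite.exists_ne_map_eq_of_infinite (fun k : ℕ => Mt δ (wrep x (k + 1)))
  rcases Nat.lt_or_ge a b with h | h
  · exact ex_idem_aux δ x (Nat.succ_pos a) (by omega) heq
  · exact ex_idem_aux δ x (Nat.succ_pos b) (by omega) heq.symm

def NatCol.Tset (δ : Q → A → Q) (w : List A) : Set ((Q → Q) × (Q → Set Q)) :=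
  Set.range (fun s => Mt δ (w ++ s))

def NatCol.GoodIdem (L : Set (ℕ → A)) (u : List A) (δ : Q → A → Q)
    (w y₀ : List A) : Prop :=
  UInv L u y₀ ∧ y₀ ≠ [] ∧ Mt δ (y₀ ++ y₀) = Mt δ y₀ ∧
    (∃ s, Mt δ (w ++ s) = Mt δ y₀) ∧ (∃ s, Mt δ (y₀ ++ s) = Mt δ w)

theorem NatCol.colors_exist {L : Set (ℕ → A)} {δ : Q → A → Q} {q0 : Q} {α : Set (Set Q)}
    (hL : ∀ w : ℕ → A, w ∈ L ↔ infSet (runOf δ q0 w) ∈ α) (u : List A) :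
    ∀ n : ℕ, ∃ C : ℕ, ∀ w : List A, UInv L u w → w ≠ [] → (Tset δ w).ncard ≤ n →
      ∃ c ≤ C, ColorAtMost L u c w := by
  intro n
  induction n with
  | zero =>
    refine ⟨0, fun w hw hwne hρ => absurd hρ ?_⟩
    have hpos : 0 < (Tset δ w).ncard :=
      (Set.ncard_pos (Set.toFinite _)).mpr ⟨Mt δ (w ++ []), ⟨[], rfl⟩⟩
    omega
  | succ n ih =>
    obtain ⟨C, hC⟩ := ih
    refine ⟨C + 2, fun w hw hwne hρ => ?_⟩
    by_cases hle : (Tset δ w).ncard ≤ n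
    · obtain ⟨c, hc1, hc2⟩ := hC w hw hwne hle
      exact ⟨c, by omega, hc2⟩
    -- preparatory facts shared by both cases, as a helper
    have prelude : ∀ z : List A, UInv L u (w ++ z) →
        ∃ y : List A, ∃ j : ℕ, 0 < j ∧ y = wrep (w ++ z) j ∧ y ≠ [] ∧
          UInv L u y ∧ Mt δ (y ++ y) = Mt δ y ∧
          (∃ s, Mt δ (w ++ s) = Mt δ y) ∧ Tset δ y ⊆ Tset δ w := by
      intro z hz
      have hwzne : w ++ z ≠ [] := append_ne_nil hwne
      obtain ⟨j, hj, hid⟩ := ex_idem δ (w ++ z)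
      refine ⟨wrep (w ++ z) j, j, hj, rfl, ?_, UInv_wrep hz j, hid, ?_, ?_⟩
      · apply List.ne_nil_of_length_pos
        rw [length_wrep]
        exact Nat.mul_pos hj (List.length_pos_iff.2 hwzne)
      · refine ⟨z ++ wrep (w ++ z) (j - 1), ?_⟩
        conv_rhs => rw [show j = (j - 1) + 1 by omega]
        rw [wrep_succ]
        simp [List.append_assoc]
      · rintro _ ⟨s, rfl⟩
        refine ⟨z ++ (wrep (w ++ z) (j - 1) ++ s), ?_⟩
        conv_rhs => rw [show j = (j - 1) + 1 by omega]
        rw [wrep_succ]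
        simp [List.append_assoc]
    by_cases hex : ∃ y₀, GoodIdem L u δ w y₀
    · -- choose parity according to the chosen good idempotent
      have hbv := hex.choose_spec
      unfold GoodIdem at hbv
      obtain ⟨hI₀, hne₀, hid₀, ⟨s₂, hs₂⟩, ⟨s₃, hs₃⟩⟩ := hbv
      obtain ⟨c, hcle, hcb⟩ :
          ∃ c : ℕ, (C + 1 ≤ c ∧ c ≤ C + 2) ∧ (Even c ↔ upw u hex.choose ∈ L) := by
        by_cases hE : Even (C + 2) ↔ upw u hex.choose ∈ L
        · exact ⟨C + 2, ⟨by omega, le_rfl⟩, hE⟩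
        · refine ⟨C + 1, ⟨le_rfl, by omega⟩, ?_⟩
          have h1 : Even (C + 2) ↔ Even C := by simp [Nat.even_add]
          have h2 : Even (C + 1) ↔ ¬ Even C := Nat.even_add_one
          tauto
      refine ⟨c, by omega, ?_⟩
      rw [colorAtMost_unfold]
      intro z hz
      obtain ⟨y, j, hj, hydef, hyne, hyInv, hid, ⟨s₄, hs₄⟩, hTy⟩ := prelude z hz
      by_cases hcase : (Tset δ y).ncard ≤ n
      · obtain ⟨c', hc'le, hc'⟩ := hC y hyInv hyne hcase
        right
        exact ⟨j, hj, ⟨c', by omega⟩, hydef ▸ hc'⟩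
      · left
        have hTeq : Tset δ y = Tset δ w := by
          apply Set.eq_of_subset_of_ncard_le hTy
          have hmono := Set.ncard_le_ncard hTy (Set.toFinite _)
          omega
        obtain ⟨s₁, hs₁⟩ : ∃ s, Mt δ (y ++ s) = Mt δ w := by
          have hmem : Mt δ (w ++ []) ∈ Tset δ w := ⟨[], rfl⟩
          rw [← hTeq] at hmem
          obtain ⟨s, hs⟩ := hmem
          refine ⟨s, ?_⟩
          have hs' : Mt δ (y ++ s) = Mt δ (w ++ []) := hs
          rwa [List.append_nil] at hs'
        have hyy₀ : ∃ s, Mt δ (y ++ s) = Mt δ hex.choose := by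
          refine ⟨s₁ ++ s₂, ?_⟩
          calc Mt δ (y ++ (s₁ ++ s₂)) = Mt δ ((y ++ s₁) ++ s₂) := by
                rw [List.append_assoc]
            _ = Mt δ (w ++ s₂) := Mt_append_congr δ hs₁ s₂
            _ = Mt δ hex.choose := hs₂
        have hy₀y : ∃ s, Mt δ (hex.choose ++ s) = Mt δ y := by
          refine ⟨s₃ ++ s₄, ?_⟩
          calc Mt δ (hex.choose ++ (s₃ ++ s₄))
              = Mt δ ((hex.choose ++ s₃) ++ s₄) := by rw [List.append_assoc]
            _ = Mt δ (w ++ s₄) := Mt_append_congr δ hs₃ s₄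
            _ = Mt δ y := hs₄
        have hR : upw u y ∈ L ↔ upw u hex.choose ∈ L :=
          glem hL u hyne hne₀ hyInv hI₀ hid hid₀ hyy₀ hy₀y
        have hpow : upw u (w ++ z) ∈ L ↔ upw u y ∈ L := by
          rw [hydef, upw_wrep u (w ++ z) (append_ne_nil hwne) j hj]
        exact (hpow.trans hR).trans hcb.symm
    · -- no good idempotent: every extension escapes
      refine ⟨C + 1, by omega, ?_⟩
      rw [colorAtMost_unfold]
      intro z hz
      obtain ⟨y, j, hj, hydef, hyne, hyInv, hid, ⟨s₄, hs₄⟩, hTy⟩ := prelude z hz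
      by_cases hcase : (Tset δ y).ncard ≤ n
      · obtain ⟨c', hc'le, hc'⟩ := hC y hyInv hyne hcase
        right
        exact ⟨j, hj, ⟨c', by omega⟩, hydef ▸ hc'⟩
      · exfalso
        have hTeq : Tset δ y = Tset δ w := by
          apply Set.eq_of_subset_of_ncard_le hTy
          have hmono := Set.ncard_le_ncard hTy (Set.toFinite _)
          omega
        obtain ⟨s₁, hs₁⟩ : ∃ s, Mt δ (y ++ s) = Mt δ w := by
          have hmem : Mt δ (w ++ []) ∈ Tset δ w := ⟨[], rfl⟩
          rw [← hTeq] at hmem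
          obtain ⟨s, hs⟩ := hmem
          refine ⟨s, ?_⟩
          have hs' : Mt δ (y ++ s) = Mt δ (w ++ []) := hs
          rwa [List.append_nil] at hs'
        exact hex ⟨y, by
          unfold GoodIdem
          exact ⟨hyInv, hyne, hid, ⟨s₄, hs₄⟩, ⟨s₁, hs₁⟩⟩⟩
end Part3

/-- reliable periods determine membership: the natural color of a
`u`-reliable `v` is a natural number which is even iff `u·v^ω ∈ L`. -/
theorem reliable_periods_determine {A : Type} [Inhabited A] (L : Set (ℕ → A))
    (hreg : OmegaRegular L) (u v : List A) (hv : v ≠ []) (hrel : UReliable L u v) :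
    ∃ c : ℕ, ncol L u v = (c : WithBot ℕ) ∧ (Even c ↔ upw u v ∈ L) := by
  classical
  obtain ⟨Q, hQF, q0, δ, α, hL⟩ := hreg
  letI := hQF
  obtain ⟨hInv, hStab⟩ := hrel
  have hURel : URel L u v := ⟨[], by rwa [List.append_nil]⟩
  obtain ⟨C, hC⟩ := NatCol.colors_exist hL u ((NatCol.Tset δ v).ncard)
  obtain ⟨c0, _, hc0⟩ := hC v hInv hv le_rfl
  have hSne : {c : ℕ | ColorAtMost L u c v}.Nonempty := ⟨c0, hc0⟩
  set c := sInf {c : ℕ | ColorAtMost L u c v} with hcdef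
  have hcmem : ColorAtMost L u c v := Nat.sInf_mem hSne
  have hncol : ncol L u v = (c : WithBot ℕ) := by
    simp only [ncol, if_pos hURel]
    rfl
  refine ⟨c, hncol, ?_⟩
  have hmain := (NatCol.colorAtMost_unfold L u c v).1 hcmem []
    (by rwa [List.append_nil])
  rcases hmain with hmem | ⟨i, hi, c', hc'⟩
  · rw [List.append_nil] at hmem
    exact hmem.symm
  · exfalso
    rw [List.append_nil] at hc'
    have hIrep : UInv L u (wrep v i) := NatCol.UInv_wrep hInv i
    have hURelrep : URel L u (wrep v i) := ⟨[], by rwa [List.append_nil]⟩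
    have h1 : ncol L u (wrep v i)
        = ((sInf {d : ℕ | ColorAtMost L u d (wrep v i)} : ℕ) : WithBot ℕ) := by
      simp only [ncol, if_pos hURelrep]
    have h2 := hStab i hi
    rw [hncol, h1] at h2
    have h3 : c = sInf {d : ℕ | ColorAtMost L u d (wrep v i)} := by
      exact_mod_cast h2
    have h4 : sInf {d : ℕ | ColorAtMost L u d (wrep v i)} ≤ (c' : ℕ) :=
      Nat.sInf_le hc'
    have h5 : (c' : ℕ) < c := c'.isLt
    omega
end

section
/- Less is more: if u ∼_L xy, then for all v ∈ Σ⁺, col_u(v) ≥ col_x(yv). In particular, if y is u-invariant, then col_u(v) ≥ col_u(yv) for all v ∈ Σ⁺. -/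
open scoped Classical

namespace LIM

lemma wcat_append {A : Type} (a b : List A) (w : ℕ → A) :
    wcat (a ++ b) w = wcat a (wcat b w) := by
  funext n
  simp only [wcat, List.length_append]
  rcases lt_or_ge n a.length with h1 | h1
  · rw [dif_pos (by omega), dif_pos h1]
    simp [List.get_eq_getElem, List.getElem_append_left h1]
  · rw [dif_neg (by omega : ¬ n < a.length)]
    rcases lt_or_ge n (a.length + b.length) with h2 | h2
    · rw [dif_pos h2, dif_pos (by omega : n - a.length < b.length)]
      simp [List.get_eq_getElem, List.getElem_append_right h1]
    · rw [dif_neg (by omega : ¬ n - a.length < b.length), dif_neg (by omega)]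
      congr 1; omega

lemma wpow_rot {A : Type} [Inhabited A] (a b : List A) :
    wpow (a ++ b) = wcat a (wpow (b ++ a)) := by
  funext n
  simp only [wpow, wcat, List.length_append]
  rcases Nat.eq_zero_or_pos (a.length + b.length) with h0 | h0
  · have ha : a.length = 0 := by omega
    have hb : b.length = 0 := by omega
    rw [List.length_eq_zero_iff.mp ha, List.length_eq_zero_iff.mp hb]
    simp
  rcases lt_or_ge n a.length with h1 | h1
  · rw [dif_pos h1, Nat.mod_eq_of_lt (by omega), List.getD_append _ _ _ _ h1,
      List.getD_eq_getElem _ _ h1]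
    rfl
  · rw [dif_neg (by omega)]
    have hL : b.length + a.length = a.length + b.length := by omega
    set Len := a.length + b.length with hLen
    set m := (n - a.length) % Len with hm
    have hmlt : m < Len := Nat.mod_lt _ h0
    have hnm : n % Len = (a.length + m) % Len := by
      conv_lhs => rw [(by omega : n = a.length + (n - a.length))]
      rw [Nat.add_mod, ← hm, Nat.add_mod a.length m, Nat.mod_eq_of_lt hmlt]
    have hmb : ((n - a.length) % (b.length + a.length)) = m := by rw [hL]
    rw [hmb]
    rcases lt_or_ge m b.length with h2 | h2
    · rw [hnm, Nat.mod_eq_of_lt (by omega), List.getD_append_right _ _ _ _ (by omega),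
        List.getD_append _ _ _ _ h2]
      congr 1; omega
    · have : (a.length + m) % Len = m - b.length := by
        have : a.length + m = Len + (m - b.length) := by omega
        rw [this, Nat.add_mod_left, Nat.mod_eq_of_lt (by omega)]
      rw [hnm, this, List.getD_append _ _ _ _ (by omega : m - b.length < a.length),
        List.getD_append_right _ _ _ _ h2]


lemma wrep_add {A : Type} (W : List A) (a b : ℕ) :
    wrep W (a + b) = wrep W a ++ wrep W b := by
  rw [wrep, wrep, wrep, List.replicate_add]
  exact List.flatten_append

lemma wrep_one {A : Type} (W : List A) : wrep W 1 = W := by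
  simp [wrep]

lemma wrep_succ {A : Type} (W : List A) (i : ℕ) :
    wrep W (i + 1) = W ++ wrep W i := by
  rw [add_comm, wrep_add, wrep_one]

lemma wrep_length {A : Type} (W : List A) (i : ℕ) :
    (wrep W i).length = i * W.length := by
  induction i with
  | zero => simp [wrep]
  | succ n ih => rw [wrep_succ, List.length_append, ih]; ring

lemma wrep_ne_nil {A : Type} {W : List A} (hW : W ≠ []) {i : ℕ} (hi : 0 < i) :
    wrep W i ≠ [] := by
  have : (wrep W i).length ≠ 0 := by
    rw [wrep_length]
    have := List.length_pos_iff.mpr hW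
    positivity
  simpa [List.length_eq_zero_iff] using this

lemma wrep_getD {A : Type} [Inhabited A] (W : List A) :
    ∀ (i m : ℕ), m < i * W.length → (wrep W i).getD m default = W.getD (m % W.length) default := by
  intro i
  induction i with
  | zero => intro m hm; omega
  | succ n ih =>
    intro m hm
    rw [wrep_succ]
    rcases lt_or_ge m W.length with h1 | h1
    · rw [List.getD_append _ _ _ _ h1, Nat.mod_eq_of_lt h1]
    · rw [List.getD_append_right _ _ _ _ h1, ih _ (by rw [Nat.succ_mul] at hm; omega)]
      congr 1
      conv_rhs => rw [(by omega : m = W.length + (m - W.length))]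
      rw [Nat.add_mod_left]

lemma wpow_wrep {A : Type} [Inhabited A] (W : List A) {i : ℕ} (hi : 0 < i) :
    wpow (wrep W i) = wpow W := by
  rcases eq_or_ne W [] with rfl | hW
  · have : wrep ([] : List A) i = [] := by
      simp [wrep, List.eq_nil_iff_forall_not_mem]
    rw [this]
  · funext n
    have hWl : 0 < W.length := List.length_pos_iff.mpr hW
    have hlen : (wrep W i).length = i * W.length := wrep_length W i
    have hpos : 0 < i * W.length := by positivity
    simp only [wpow, hlen]
    rw [wrep_getD W i _ (Nat.mod_lt _ hpos), Nat.mod_mod_of_dvd _ ⟨i, by ring⟩]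

lemma upw_wrep {A : Type} [Inhabited A] (u W : List A) {i : ℕ} (hi : 0 < i) :
    upw u (wrep W i) = upw u W := by
  rw [upw, upw, wpow_wrep W hi]


set_option linter.unusedSectionVars false

variable {A : Type} [Inhabited A] {L : Set (ℕ → A)}

lemma colorAtMost_iff (u : List A) (c : ℕ) (v : List A) :
    ColorAtMost L u c v ↔ ∀ z : List A, UInv L u (v ++ z) →
      ((upw u (v ++ z) ∈ L ↔ Even c) ∨
        ∃ i : ℕ, 0 < i ∧ ∃ c' : Fin c, ColorAtMost L u c' (wrep (v ++ z) i)) := by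
  rw [ColorAtMost]

lemma uinv_iff {u w : List A} :
    UInv L u w ↔ ∀ ζ, wcat u ζ ∈ L ↔ wcat u (wcat w ζ) ∈ L := by
  constructor <;> intro h ζ <;> have := h ζ <;> rwa [wcat_append] at *

lemma wcat_nil (w : ℕ → A) : wcat ([] : List A) w = w := by
  funext n; simp [wcat]

lemma uinv_wrep {u W : List A} (h : UInv L u W) (i : ℕ) : UInv L u (wrep W i) := by
  induction i with
  | zero =>
    intro ζ
    rw [show u ++ wrep W 0 = u from List.append_nil u]
  | succ n ih =>
    intro ζ
    rw [wrep_succ, wcat_append, wcat_append]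
    calc wcat u ζ ∈ L ↔ wcat u (wcat (wrep W n) ζ) ∈ L := by
            have := ih ζ; rwa [wcat_append] at this
      _ ↔ wcat u (wcat W (wcat (wrep W n) ζ)) ∈ L := uinv_iff.mp h _

section Rot

variable {u x y : List A}

lemma rot_inv (h : simL L u (x ++ y)) {v z : List A}
    (hz : UInv L x ((y ++ v) ++ z)) : UInv L u (v ++ (z ++ y)) := by
  intro ζ
  have h1 := h ζ
  have h2 := h (wcat (v ++ (z ++ y)) ζ)
  have h3 := hz (wcat y ζ)
  simp only [wcat_append] at h1 h2 h3 ⊢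
  tauto

lemma rot_upw (h : simL L u (x ++ y)) (v z : List A) :
    upw x ((y ++ v) ++ z) ∈ L ↔ upw u (v ++ (z ++ y)) ∈ L := by
  have e1 : upw x ((y ++ v) ++ z) = wcat x (wcat y (wpow (v ++ (z ++ y)))) := by
    rw [upw, show (y ++ v) ++ z = y ++ (v ++ z) from by simp, wpow_rot,
      show (v ++ z) ++ y = v ++ (z ++ y) from by simp]
  have h2 := h (wpow (v ++ (z ++ y)))
  rw [wcat_append] at h2
  rw [e1, upw]
  exact h2.symm

lemma rep_rot (y v z : List A) (i : ℕ) :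
    wrep ((y ++ v) ++ z) (i + 1) = y ++ (wrep (v ++ (z ++ y)) i ++ (v ++ z)) := by
  induction i with
  | zero => simp [wrep_one, wrep]
  | succ n ih =>
    rw [wrep_succ ((y ++ v) ++ z) (n+1), ih, wrep_succ (v ++ (z ++ y)) n]
    simp

lemma colorAtMost_append {u : List A} {c : ℕ} {w : List A} (s : List A)
    (H : ColorAtMost L u c w) : ColorAtMost L u c (w ++ s) := by
  rw [colorAtMost_iff] at H ⊢
  intro z hz
  have hz' : UInv L u (w ++ (s ++ z)) := by rwa [← List.append_assoc]
  rcases H (s ++ z) hz' with hp | ⟨i, hi, c', hc⟩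
  · left; rwa [← List.append_assoc] at hp
  · right; exact ⟨i, hi, c', by rwa [← List.append_assoc] at hc⟩

lemma main_transfer (h : simL L u (x ++ y)) :
    ∀ c v, ColorAtMost L u c v → ColorAtMost L x c (y ++ v) := by
  intro c
  induction c using Nat.strong_induction_on with
  | _ c IH =>
    intro v H
    rw [colorAtMost_iff] at H ⊢
    intro z hz
    have hinv : UInv L u (v ++ (z ++ y)) := rot_inv h hz
    rcases H (z ++ y) hinv with hp | ⟨i, hi, c', hc⟩
    · left
      rw [show y ++ v ++ z = (y ++ v) ++ z from by simp] at *
      exact (rot_upw h v z).trans hp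
    · right
      refine ⟨i + 1, Nat.succ_pos _, c', ?_⟩
      have h1 : ColorAtMost L u c' (wrep (v ++ (z ++ y)) i ++ (v ++ z)) :=
        colorAtMost_append _ hc
      have h2 := IH c' c'.isLt _ h1
      rw [show y ++ v ++ z = (y ++ v) ++ z from by simp, rep_rot]
      exact h2

lemma urel_transfer (h : simL L u (x ++ y)) {v : List A}
    (hr : URel L x (y ++ v)) : URel L u v := by
  obtain ⟨z, hz⟩ := hr
  exact ⟨z ++ y, rot_inv h hz⟩

end Rot


section Automaton

variable {Q : Type}

def dstar (δ : Q → A → Q) (q : Q) (w : List A) : Q := w.foldl δ q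

def visits (δ : Q → A → Q) (q : Q) (w : List A) : Set Q :=
  {p | ∃ t, t <+: w ∧ dstar δ q t = p}

def profP (δ : Q → A → Q) (w : List A) : (Q → Q) × (Q → Set Q) :=
  (fun q => dstar δ q w, fun q => visits δ q w)

variable {δ : Q → A → Q}

lemma dstar_append (q : Q) (s t : List A) :
    dstar δ q (s ++ t) = dstar δ (dstar δ q s) t :=
  List.foldl_append

lemma visits_append (q : Q) (s t : List A) :
    visits δ q (s ++ t) = visits δ q s ∪ visits δ (dstar δ q s) t := by
  ext p
  constructor
  · rintro ⟨l, hl, rfl⟩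
    rcases le_or_gt l.length s.length with hle | hlt
    · exact Or.inl ⟨l, List.prefix_of_prefix_length_le hl (s.prefix_append t) hle, rfl⟩
    · obtain ⟨l', rfl⟩ := List.prefix_of_prefix_length_le (s.prefix_append t) hl hlt.le
      exact Or.inr ⟨l', (List.prefix_append_right_inj s).mp hl, by rw [dstar_append]⟩
  · rintro (⟨l, hl, rfl⟩ | ⟨l, hl, rfl⟩)
    · exact ⟨l, hl.trans (s.prefix_append t), rfl⟩
    · exact ⟨s ++ l, by simpa using hl, by rw [dstar_append]⟩

lemma self_mem_visits (q : Q) (w : List A) : q ∈ visits δ q w :=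
  ⟨[], List.nil_prefix, rfl⟩

lemma profP_fst (w : List A) (q : Q) : (profP δ w).1 q = dstar δ q w := rfl
lemma profP_snd (w : List A) (q : Q) : (profP δ w).2 q = visits δ q w := rfl

lemma profP_congr_right {a b : List A} (h : profP δ a = profP δ b) (c : List A) :
    profP δ (a ++ c) = profP δ (b ++ c) := by
  have h1 : ∀ q, dstar δ q a = dstar δ q b := fun q => congrFun (congrArg Prod.fst h) q
  have h2 : ∀ q, visits δ q a = visits δ q b := fun q => congrFun (congrArg Prod.snd h) q
  have e1 : (profP δ (a ++ c)).1 = (profP δ (b ++ c)).1 := by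
    funext q
    simp only [profP_fst, dstar_append, h1]
  have e2 : (profP δ (a ++ c)).2 = (profP δ (b ++ c)).2 := by
    funext q
    simp only [profP_snd, visits_append, h1, h2]
  exact Prod.ext e1 e2


lemma wcat_wpow (W : List A) : wcat W (wpow W) = wpow W := by
  funext n
  simp only [wcat, wpow]
  split_ifs with h
  · rw [Nat.mod_eq_of_lt h, List.getD_eq_getElem _ _ h]
    rfl
  · push_neg at h
    rcases Nat.eq_zero_or_pos W.length with h0 | h0
    · simp [h0]
    · rw [Nat.mod_eq_sub_mod h]

lemma runOf_wcat_prefix (q : Q) (s : List A) (w : ℕ → A) :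
    ∀ n, n ≤ s.length → runOf δ q (wcat s w) n = dstar δ q (s.take n) := by
  intro n
  induction n with
  | zero => intro _; simp [runOf, dstar]
  | succ n ih =>
    intro hn
    have hlt : n < s.length := by omega
    rw [runOf, ih (by omega)]
    have hw : wcat s w n = s.get ⟨n, hlt⟩ := dif_pos hlt
    rw [hw, List.take_succ, List.getElem?_eq_getElem hlt]
    simp only [dstar, Option.toList_some, List.foldl_append, List.foldl_cons, List.foldl_nil,
      List.get_eq_getElem]

lemma runOf_wcat (q : Q) (s : List A) (w : ℕ → A) (n : ℕ) :
    runOf δ q (wcat s w) (s.length + n) = runOf δ (dstar δ q s) w n := by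
  induction n with
  | zero =>
    have := runOf_wcat_prefix (δ := δ) q s w s.length le_rfl
    simpa [List.take_length, runOf] using this
  | succ n ih =>
    have : s.length + (n + 1) = (s.length + n) + 1 := by omega
    rw [this, runOf, runOf, ih]
    congr 1
    have : ¬ s.length + n < s.length := by omega
    rw [wcat, dif_neg this]
    congr 1
    omega

lemma runOf_wpow_block (q : Q) (W : List A) (n : ℕ) :
    runOf δ q (wpow W) (W.length + n) = runOf δ (dstar δ q W) (wpow W) n := by
  conv_lhs => rw [← wcat_wpow W]
  exact runOf_wcat q W (wpow W) n


lemma infSet_run_eq (q0 : Q) (u W : List A) (hW : W ≠ [])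
    (hid : profP δ (W ++ W) = profP δ W) :
    infSet (runOf δ q0 (upw u W)) = visits δ (dstar δ (dstar δ q0 u) W) W := by
  have hWpos : 0 < W.length := List.length_pos_iff.mpr hW
  set p := dstar δ q0 u with hp
  set qs := dstar δ p W with hqs
  have idφ : ∀ q, dstar δ (dstar δ q W) W = dstar δ q W := by
    intro q
    have := congrFun (congrArg Prod.fst hid) q
    simpa [profP_fst, dstar_append] using this
  have qs_fix : dstar δ qs W = qs := idφ p
  set R := runOf δ qs (wpow W) with hR
  have step1 : ∀ n, runOf δ q0 (upw u W) (u.length + n) = runOf δ p (wpow W) n := by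
    intro n; exact runOf_wcat q0 u (wpow W) n
  have step2 : ∀ n, runOf δ p (wpow W) (W.length + n) = R n := by
    intro n; rw [runOf_wpow_block, ← hqs]
  have hper : ∀ n, R (W.length + n) = R n := by
    intro n; rw [hR, runOf_wpow_block, qs_fix]
  have per_k : ∀ k n, R (k * W.length + n) = R n := by
    intro k
    induction k with
    | zero => intro n; simp
    | succ m ih =>
      intro n
      have : (m + 1) * W.length + n = W.length + (m * W.length + n) := by ring
      rw [this, hper, ih]
  have Rval : ∀ n, n ≤ W.length → R n = dstar δ qs (W.take n) := by
    intro n hn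
    rw [hR, ← wcat_wpow W]
    exact runOf_wcat_prefix qs W (wpow W) n hn
  have Rmod : ∀ n, R n = dstar δ qs (W.take (n % W.length)) := by
    intro n
    have hm : n % W.length < W.length := Nat.mod_lt _ hWpos
    have hdecomp : (n / W.length) * W.length + n % W.length = n := by
      rw [mul_comm]; exact Nat.div_add_mod n W.length
    conv_lhs => rw [← hdecomp]
    rw [per_k, Rval _ hm.le]
  ext q
  constructor
  · intro hq
    obtain ⟨m, hm1, hm2⟩ := hq (u.length + W.length)
    set n := m - u.length - W.length with hn
    have hmeq : m = u.length + (W.length + n) := by omega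
    rw [hmeq, step1, step2, Rmod] at hm2
    exact ⟨W.take (n % W.length), List.take_prefix _ _, hm2⟩
  · rintro ⟨t, ht, rfl⟩
    have htle : t.length ≤ W.length := ht.length_le
    set n0 := if t.length = W.length then 0 else t.length with hn0
    have hlt : n0 < W.length := by
      rw [hn0]; split_ifs with he
      · exact hWpos
      · omega
    have hval : dstar δ qs (W.take n0) = dstar δ qs t := by
      rw [hn0]; split_ifs with he
      · have : t = W := ht.eq_of_length he
        rw [this, List.take_zero]
        exact qs_fix.symm
      · congr 1
        exact (List.prefix_iff_eq_take.mp ht).symm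
    intro N
    refine ⟨u.length + (W.length + (N * W.length + n0)), by nlinarith, ?_⟩
    rw [step1, step2, per_k, Rval _ hlt.le, hval]


lemma consec {α : Set (Set Q)} {q0 : Q}
    (spec : ∀ w, w ∈ L ↔ infSet (runOf δ q0 w) ∈ α) (u E F Y : List A) (s : List A)
    (hE : E ≠ []) (hFs : F = E ++ s)
    (idE : profP δ (E ++ E) = profP δ E) (idF : profP δ (F ++ F) = profP δ F)
    (hY : profP δ (F ++ Y) = profP δ E) :
    (upw u E ∈ L ↔ upw u F ∈ L) := by
  have hF : F ≠ [] := by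
    rw [hFs]
    intro hcon
    exact hE (List.append_eq_nil_iff.mp hcon).1
  set p := dstar δ q0 u with hp
  set qe := dstar δ p E with hqe
  set qf := dstar δ p F with hqf
  have dY : ∀ q, dstar δ q (F ++ Y) = dstar δ q E := fun q => congrFun (congrArg Prod.fst hY) q
  have vY : ∀ q, visits δ q (F ++ Y) = visits δ q E := fun q => congrFun (congrArg Prod.snd hY) q
  have dE2 : ∀ q, dstar δ q (E ++ E) = dstar δ q E := fun q => congrFun (congrArg Prod.fst idE) q
  have vE2 : ∀ q, visits δ q (E ++ E) = visits δ q E := fun q => congrFun (congrArg Prod.snd idE) q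
  have dF2 : ∀ q, dstar δ q (F ++ F) = dstar δ q F := fun q => congrFun (congrArg Prod.fst idF) q
  have vF2 : ∀ q, visits δ q (F ++ F) = visits δ q F := fun q => congrFun (congrArg Prod.snd idF) q
  have visEF : ∀ q, visits δ q F = visits δ q E := by
    intro q
    apply Set.Subset.antisymm
    · rw [← vY q, visits_append]
      exact Set.subset_union_left
    · rw [hFs, visits_append]
      exact Set.subset_union_left
  have dqeF : dstar δ qe F = qf := by
    have hiter : ∀ q, dstar δ q (E ++ F) = dstar δ q F := by
      intro q
      rw [hFs, ← List.append_assoc, dstar_append, dE2, ← dstar_append]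
    rw [hqe, ← dstar_append, hiter, hqf]
  have dqfE : dstar δ qf E = qe := by
    have h1 : dstar δ qf E = dstar δ qf Y := by
      rw [← dY qf, dstar_append]
      congr 1
      rw [hqf, ← dstar_append, dF2]
    have h2 : qe = dstar δ qf Y := by
      rw [hqe, ← dY p, dstar_append, hqf]
    rw [h1, ← h2]
  have vsub1 : visits δ qe E ⊆ visits δ qf E := by
    have := vE2 qf
    rw [visits_append, dqfE] at this
    rw [← this]
    exact Set.subset_union_right
  have vsub2 : visits δ qf F ⊆ visits δ qe F := by
    have := vF2 qe
    rw [visits_append, dqeF] at this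
    rw [← this]
    exact Set.subset_union_right
  have vmain : visits δ qe E = visits δ qf F := by
    apply Set.Subset.antisymm
    · intro q hq
      have h1 := vsub1 hq
      rwa [← visEF qf] at h1
    · intro q hq
      have h1 := vsub2 hq
      rwa [visEF qe] at h1
  rw [spec (upw u E), spec (upw u F), infSet_run_eq q0 u E hE idE,
    infSet_run_eq q0 u F hF idF, ← hp, ← hqe, ← hqf, vmain]


lemma exists_idem [Finite Q] (δ : Q → A → Q) (W : List A) :
    ∃ i, 0 < i ∧ profP δ (wrep W i ++ wrep W i) = profP δ (wrep W i) := by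
  obtain ⟨a', b', hne, heq⟩ :=
    Finite.exists_ne_map_eq_of_infinite (fun i : ℕ => profP δ (wrep W i))
  wlog hab : a' < b' generalizing a' b'
  · exact this b' a' hne.symm heq.symm (by omega)
  set d := b' - a' with hd
  have hdpos : 0 < d := by omega
  have hstep : ∀ m, a' ≤ m → profP δ (wrep W (m + d)) = profP δ (wrep W m) := by
    intro m hm
    have h1 : profP δ (wrep W (a' + d)) = profP δ (wrep W a') := by
      rw [show a' + d = b' by omega]
      exact heq.symm
    have hgoal : profP δ (wrep W ((a' + d) + (m - a'))) = profP δ (wrep W (a' + (m - a'))) := by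
      rw [wrep_add W (a' + d) (m - a'), wrep_add W a' (m - a')]
      exact profP_congr_right h1 _
    calc profP δ (wrep W (m + d)) = profP δ (wrep W ((a' + d) + (m - a'))) := by
          rw [show m + d = (a' + d) + (m - a') by omega]
      _ = profP δ (wrep W (a' + (m - a'))) := hgoal
      _ = profP δ (wrep W m) := by rw [show a' + (m - a') = m by omega]
  have hiter : ∀ k m, a' ≤ m → profP δ (wrep W (m + k * d)) = profP δ (wrep W m) := by
    intro k
    induction k with
    | zero => intro m _; simp
    | succ j ih =>
      intro m hm
      rw [show m + (j + 1) * d = (m + j * d) + d by ring, hstep _ (by omega), ih m hm]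
  refine ⟨(a' + 1) * d, by positivity, ?_⟩
  rw [← wrep_add]
  have : (a' + 1) * d + (a' + 1) * d = (a' + 1) * d + (a' + 1) * d := rfl
  rw [hiter (a' + 1) ((a' + 1) * d) (by nlinarith)]

def extSet (δ : Q → A → Q) (E : List A) : Set ((Q → Q) × (Q → Set Q)) :=
  {m | ∃ Y : List A, profP δ (E ++ Y) = m}

lemma key [Finite Q] {q0 : Q} {α : Set (Set Q)}
    (spec : ∀ w, w ∈ L ↔ infSet (runOf δ q0 w) ∈ α) (u : List A) :
    ∀ (n : ℕ) (E : List A), E ≠ [] → profP δ (E ++ E) = profP δ E →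
      (extSet δ E).ncard ≤ n → (∀ c, c ≤ 2 * n + 1 → ¬ ColorAtMost L u c E) → False := by
  intro n
  induction n with
  | zero =>
    intro E hE _ hcard _
    have hmem : profP δ E ∈ extSet δ E := ⟨[], by rw [List.append_nil]⟩
    have : 0 < (extSet δ E).ncard := (Set.ncard_pos (Set.toFinite _)).mpr ⟨_, hmem⟩
    omega
  | succ n IH =>
    intro E hE idE hcard hbud
    obtain ⟨c, hcge, hcle, hEvc⟩ :
        ∃ c, 2 * n + 2 ≤ c ∧ c ≤ 2 * (n + 1) + 1 ∧ (Even c ↔ upw u E ∈ L) := by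
      by_cases hb : upw u E ∈ L
      · exact ⟨2 * n + 2, le_rfl, by omega, iff_of_true ⟨n + 1, by ring⟩ hb⟩
      · refine ⟨2 * n + 3, by omega, by omega, iff_of_false ?_ hb⟩
        rintro ⟨k, hk⟩
        omega
    have hfail := hbud c hcle
    rw [colorAtMost_iff] at hfail
    push_neg at hfail
    obtain ⟨z, hzinv, hnp, hnr⟩ := hfail
    obtain ⟨i, hi, idF⟩ := exists_idem δ (E ++ z)
    set F := wrep (E ++ z) i with hFdef
    have hEz : E ++ z ≠ [] := by
      intro hcon
      exact hE (List.append_eq_nil_iff.mp hcon).1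
    have hFne : F ≠ [] := wrep_ne_nil hEz hi
    have hFs : F = E ++ (z ++ wrep (E ++ z) (i - 1)) := by
      rw [hFdef, ← List.append_assoc]
      conv_lhs => rw [show i = 1 + (i - 1) by omega]
      rw [wrep_add, wrep_one]
    have hmemF : (upw u F ∈ L) ↔ (upw u (E ++ z) ∈ L) := by rw [hFdef, upw_wrep u (E ++ z) hi]
    have hmm : (upw u (E ++ z) ∈ L) ↔ ¬ Even c := by tauto
    by_cases hA : ∃ Y, profP δ (F ++ Y) = profP δ E
    · obtain ⟨Y, hY⟩ := hA
      have hcons := consec spec u E F Y _ hE hFs idE idF hY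
      tauto
    · have hsub : extSet δ F ⊆ extSet δ E := by
        rintro m ⟨Y, hY⟩
        refine ⟨z ++ wrep (E ++ z) (i - 1) ++ Y, ?_⟩
        rw [← hY, hFs]
        simp [List.append_assoc]
      have hnotin : profP δ E ∉ extSet δ F := hA
      have hss : extSet δ F ⊂ extSet δ E :=
        ⟨hsub, fun hcon => hnotin (hcon ⟨[], by rw [List.append_nil]⟩)⟩
      have hlt : (extSet δ F).ncard < (extSet δ E).ncard :=
        Set.ncard_lt_ncard hss (Set.toFinite _)
      apply IH F hFne idF (by omega)
      intro c' hc'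
      have hc'lt : c' < c := by omega
      exact hnr i hi ⟨c', hc'lt⟩


end Automaton

lemma exists_colorAtMost (hreg : OmegaRegular L) (u v : List A) (hv : v ≠ []) :
    ∃ c, ColorAtMost L u c v := by
  by_contra hcon
  push_neg at hcon
  obtain ⟨Q, hQ, q0, δ, α, spec⟩ := hreg
  haveI : Finite Q := ⟨hQ.equivFin⟩
  set B := (Set.univ : Set ((Q → Q) × (Q → Set Q))).ncard with hB
  have hfail := hcon (2 * B + 2)
  rw [colorAtMost_iff] at hfail
  push_neg at hfail
  obtain ⟨z, hzinv, hnp, hnr⟩ := hfail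
  obtain ⟨i, hi, idF⟩ := exists_idem δ (v ++ z)
  have hvz : v ++ z ≠ [] := by
    intro hc
    exact hv (List.append_eq_nil_iff.mp hc).1
  refine key spec u B (wrep (v ++ z) i) (wrep_ne_nil hvz hi) idF
    (Set.ncard_le_ncard (Set.subset_univ _) (Set.toFinite _)) ?_
  intro c hc
  exact hnr i hi ⟨c, by omega⟩

lemma part1 (hreg : OmegaRegular L) (u x y : List A) (h : simL L u (x ++ y)) :
    ∀ v : List A, v ≠ [] → ncol L x (y ++ v) ≤ ncol L u v := by
  intro v hv
  rw [ncol, ncol]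
  by_cases hux : URel L x (y ++ v)
  · rw [if_pos hux]
    have huv : URel L u v := urel_transfer h hux
    rw [if_pos huv]
    obtain ⟨c0, hc0⟩ := exists_colorAtMost hreg u v hv
    have hmem : sInf {c : ℕ | ColorAtMost L u c v} ∈ {c : ℕ | ColorAtMost L u c v} :=
      Nat.sInf_mem ⟨c0, hc0⟩
    have htrans : ColorAtMost L x (sInf {c : ℕ | ColorAtMost L u c v}) (y ++ v) :=
      main_transfer h _ v hmem
    exact_mod_cast Nat.sInf_le htrans
  · rw [if_neg hux]
    exact bot_le

end LIM

/-- less is more: if `u ∼_L xy` then `col_u(v) ≥ col_x(yv)`; in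
particular, if `y` is `u`-invariant then `col_u(v) ≥ col_u(yv)`. -/
theorem less_is_more {A : Type} [Inhabited A] (L : Set (ℕ → A))
    (hreg : OmegaRegular L) (u x y : List A) (h : simL L u (x ++ y)) :
    (∀ v : List A, v ≠ [] → ncol L x (y ++ v) ≤ ncol L u v) ∧
    (UInv L u y → ∀ v : List A, v ≠ [] → ncol L u (y ++ v) ≤ ncol L u v) := by
  exact ⟨LIM.part1 hreg u x y h, fun hy => LIM.part1 hreg u u y hy⟩
end
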